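/- arXiv:2407.20620 — 6 statements merged into one kernel-verified Lean document; each statement's English description precedes it below -/
import Mathlib

section
/- Let f : ℝⁿ → ℝ be continuously differentiable, m-strongly convex with m > 0, and have L-Lipschitz gradient, let g : ℝⁿ → ℝ be convex and lower semicontinuous, let μ = 1/(2L), and let α > 0. Then there exists a constant c > 0 such that for every continuously differentiable x : [0,∞) → ℝⁿ satisfying ẋ(t) = −α G_μ(x(t)) for all t ≥ 0, and the unique minimizer x⋆ of F = f + g: ‖x(t) − x⋆‖ ≤ c e^{−α m t} ‖x(0) − x⋆‖ for all t ≥ 0. -/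
open Set RealInnerProductSpace

noncomputable section

variable {E : Type*} [NormedAddCommGroup E] [InnerProductSpace ℝ E] [CompleteSpace E]

/-- derivative of t ↦ φ (x + t • d) -/
lemma aux_line_deriv {φ : E → ℝ} {φ' : E → E} (hd : ∀ z, HasGradientAt φ (φ' z) z)
    (x d : E) (t : ℝ) :
    HasDerivAt (fun s : ℝ => φ (x + s • d)) ⟪φ' (x + t • d), d⟫ t := by
  have hc : HasDerivAt (fun s : ℝ => x + s • d) d t := by
    simpa using ((hasDerivAt_id t).smul_const d).const_add x
  have := ((hd (x + t • d)).hasFDerivAt).comp_hasDerivAt t hc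
  simpa [InnerProductSpace.toDual_apply_apply, Function.comp_def] using this

/-- gradient inequality for a convex differentiable function -/
lemma aux_grad_ineq {φ : E → ℝ} {φ' : E → E} (hconv : ConvexOn ℝ univ φ)
    (hd : ∀ z, HasGradientAt φ (φ' z) z) (x y : E) :
    φ x + ⟪φ' x, y - x⟫ ≤ φ y := by
  set d := y - x with hdd
  set q : ℝ → ℝ := fun s => φ (x + s • d) with hq
  have hq01 : q 0 = φ x ∧ q 1 = φ y := by constructor <;> simp [hq, hdd]
  have hslope : ∀ s ∈ Ioc (0:ℝ) 1, (q s - q 0) / s ≤ q 1 - q 0 := by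
    intro s hs
    have h0 : q s ≤ (1 - s) * q 0 + s * q 1 := by
      have := hconv.2 (mem_univ (x + (0:ℝ) • d)) (mem_univ (x + (1:ℝ) • d))
        (show (0:ℝ) ≤ 1 - s by linarith [hs.2]) hs.1.le (by ring : (1 - s) + s = 1)
      have harg : (1 - s) • (x + (0:ℝ) • d) + s • (x + (1:ℝ) • d) = x + s • d := by
        simp [smul_add, smul_smul]; module
      rw [harg] at this
      simpa [hq] using this
    rw [div_le_iff₀ hs.1]
    nlinarith [hs.1]
  have hder : HasDerivAt q ⟪φ' x, d⟫ 0 := by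
    simpa using aux_line_deriv hd x d 0
  have htend : Filter.Tendsto (fun s => (q s - q 0) / s) (nhdsWithin 0 (Ioi 0))
      (nhds ⟪φ' x, d⟫) := by
    have := hasDerivAt_iff_tendsto_slope.1 hder
    have h2 := this.mono_left (nhdsWithin_mono 0 (by intro z hz; exact ne_of_gt hz))
    refine h2.congr (fun s => ?_)
    simp [slope_def_field]
  have hle : ⟪φ' x, d⟫ ≤ q 1 - q 0 := by
    refine le_of_tendsto htend ?_
    filter_upwards [Ioc_mem_nhdsGT_of_mem (by constructor <;> norm_num : (0:ℝ) ∈ Ico (0:ℝ) 1)]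
      with s hs using hslope s hs
  rw [hq01.1, hq01.2] at hle
  linarith

/-- descent lemma from Lipschitz gradient -/
lemma aux_descent {φ : E → ℝ} {φ' : E → E} {L : ℝ} (hL : 0 < L)
    (hd : ∀ z, HasGradientAt φ (φ' z) z)
    (hLip : ∀ x y, ‖φ' x - φ' y‖ ≤ L * ‖x - y‖) (x y : E) :
    φ y ≤ φ x + ⟪φ' x, y - x⟫ + L / 2 * ‖y - x‖ ^ 2 := by
  set d := y - x with hdd
  set u : ℝ → ℝ := fun s => φ (x + s • d) - s * ⟪φ' x, d⟫ - L * s ^ 2 / 2 * ‖d‖ ^ 2 with hu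
  have hder : ∀ s : ℝ, HasDerivAt u
      (⟪φ' (x + s • d), d⟫ - ⟪φ' x, d⟫ - L * s * ‖d‖ ^ 2) s := by
    intro s
    have h1 := aux_line_deriv hd x d s
    have h2 : HasDerivAt (fun s : ℝ => s * ⟪φ' x, d⟫) ⟪φ' x, d⟫ s := by
      simpa using (hasDerivAt_id s).mul_const ⟪φ' x, d⟫
    have h3 : HasDerivAt (fun s : ℝ => L * s ^ 2 / 2 * ‖d‖ ^ 2) (L * s * ‖d‖ ^ 2) s := by
      have : HasDerivAt (fun s : ℝ => s ^ 2) (2 * s) s := by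
        simpa using hasDerivAt_pow 2 s
      have := ((this.const_mul L).div_const 2).mul_const (‖d‖ ^ 2)
      exact this.congr_deriv (by ring)
    exact (h1.sub h2).sub h3
  have hanti : AntitoneOn u (Icc 0 1) := by
    apply antitoneOn_of_hasDerivWithinAt_nonpos (convex_Icc 0 1)
      (fun s _ => (hder s).continuousAt.continuousWithinAt)
      (fun s hs => ((hder s).hasDerivWithinAt))
    intro s hs
    rw [interior_Icc] at hs
    have hb : ⟪φ' (x + s • d) - φ' x, d⟫ ≤ L * s * ‖d‖ ^ 2 := by
      calc ⟪φ' (x + s • d) - φ' x, d⟫ ≤ ‖φ' (x + s • d) - φ' x‖ * ‖d‖ :=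
            real_inner_le_norm _ _
        _ ≤ L * ‖(x + s • d) - x‖ * ‖d‖ := by
            gcongr; exact hLip _ _
        _ = L * (|s| * ‖d‖) * ‖d‖ := by rw [add_sub_cancel_left, norm_smul]; rfl
        _ = L * s * ‖d‖ ^ 2 := by rw [abs_of_pos hs.1]; ring
    have heq : ⟪φ' (x + s • d), d⟫ - ⟪φ' x, d⟫ = ⟪φ' (x + s • d) - φ' x, d⟫ := by
      rw [inner_sub_left]
    rw [sub_sub, sub_nonpos, ← sub_le_iff_le_add'] at *
    linarith [heq ▸ hb]
  have h01 := hanti (by constructor <;> norm_num : (0:ℝ) ∈ Icc (0:ℝ) 1)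
    (by constructor <;> norm_num : (1:ℝ) ∈ Icc (0:ℝ) 1) zero_le_one
  simp only [hu, zero_smul, add_zero, one_smul, zero_mul, zero_pow, mul_zero, zero_div,
    sub_zero, one_mul, one_pow, mul_one] at h01
  have hxy : x + d = y := by rw [hdd]; abel
  rw [hxy] at h01
  nlinarith [h01]

/-- cocoercivity of the gradient of a convex function with quadratic upper bound -/
lemma aux_coco_star {φ : E → ℝ} {φ' : E → E} {ℓ : ℝ} (hℓ : 0 < ℓ)
    (hconv : ConvexOn ℝ univ φ) (hd : ∀ z, HasGradientAt φ (φ' z) z)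
    (hub : ∀ a b, φ b ≤ φ a + ⟪φ' a, b - a⟫ + ℓ / 2 * ‖b - a‖ ^ 2) (x y : E) :
    φ x + ⟪φ' x, y - x⟫ + ‖φ' y - φ' x‖ ^ 2 / (2 * ℓ) ≤ φ y := by
  set Δ := φ' y - φ' x with hΔ
  set z := y - ℓ⁻¹ • Δ with hz
  have h1 := aux_grad_ineq hconv hd x z
  have h2 := hub y z
  have e1 : z - y = -(ℓ⁻¹ • Δ) := by rw [hz]; abel
  have e2 : z - x = (y - x) - ℓ⁻¹ • Δ := by rw [hz]; abel
  have i1 : ⟪φ' y, z - y⟫ = -(ℓ⁻¹ * ⟪φ' y, Δ⟫) := by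
    rw [e1, inner_neg_right, real_inner_smul_right]
  have i2 : ‖z - y‖ ^ 2 = ℓ⁻¹ ^ 2 * ‖Δ‖ ^ 2 := by
    rw [e1, norm_neg, norm_smul, Real.norm_eq_abs, abs_inv, abs_of_pos hℓ]
    ring
  have i3 : ⟪φ' x, z - x⟫ = ⟪φ' x, y - x⟫ - ℓ⁻¹ * ⟪φ' x, Δ⟫ := by
    rw [e2, inner_sub_right, real_inner_smul_right]
  have i4 : ℓ⁻¹ * ⟪φ' y, Δ⟫ - ℓ⁻¹ * ⟪φ' x, Δ⟫ = ℓ⁻¹ * ‖Δ‖ ^ 2 := by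
    rw [← mul_sub, ← inner_sub_left, ← hΔ, real_inner_self_eq_norm_sq]
  have e3 : ℓ / 2 * (ℓ⁻¹ ^ 2 * ‖Δ‖ ^ 2) = ℓ⁻¹ / 2 * ‖Δ‖ ^ 2 := by
    field_simp
  have e4 : ‖Δ‖ ^ 2 / (2 * ℓ) = ℓ⁻¹ / 2 * ‖Δ‖ ^ 2 := by
    rw [div_eq_mul_inv, mul_inv]
    ring
  rw [i1, i2, e3] at h2
  rw [i3] at h1
  rw [e4]
  linarith [h1, h2, i4]

lemma aux_coco {φ : E → ℝ} {φ' : E → E} {ℓ : ℝ} (hℓ : 0 < ℓ)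
    (hconv : ConvexOn ℝ univ φ) (hd : ∀ z, HasGradientAt φ (φ' z) z)
    (hub : ∀ a b, φ b ≤ φ a + ⟪φ' a, b - a⟫ + ℓ / 2 * ‖b - a‖ ^ 2) (x y : E) :
    ‖φ' x - φ' y‖ ^ 2 / ℓ ≤ ⟪φ' x - φ' y, x - y⟫ := by
  have h1 := aux_coco_star hℓ hconv hd hub x y
  have h2 := aux_coco_star hℓ hconv hd hub y x
  have e1 : ⟪φ' x, y - x⟫ + ⟪φ' y, x - y⟫ = -⟪φ' x - φ' y, x - y⟫ := by
    rw [inner_sub_left]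
    have h3 : ⟪φ' x, y - x⟫ = -⟪φ' x, x - y⟫ := by
      rw [← inner_neg_right]; congr 1; abel
    rw [h3]; ring
  have e2 : ‖φ' x - φ' y‖ = ‖φ' y - φ' x‖ := norm_sub_rev _ _
  have e5 : ‖φ' y - φ' x‖ ^ 2 / (2 * ℓ) + ‖φ' y - φ' x‖ ^ 2 / (2 * ℓ)
      = ‖φ' y - φ' x‖ ^ 2 / ℓ := by ring
  rw [e2] at h2 ⊢
  linarith [h1, h2, e1, e5]

/-- subgradient inequality at the prox point -/
lemma aux_prox_subgrad {g : E → ℝ} {μ : ℝ} (hg : ConvexOn ℝ univ g) (hμ : 0 < μ)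
    {u p : E} (hp : IsMinOn (fun z => g z + ‖z - u‖ ^ 2 / (2 * μ)) univ p) (z : E) :
    g p + ⟪u - p, z - p⟫ / μ ≤ g z := by
  have key : ∀ t : ℝ, t ∈ Ioc (0:ℝ) 1 →
      0 ≤ g z - g p + ⟪p - u, z - p⟫ / μ + t * (‖z - p‖ ^ 2 / (2 * μ)) := by
    intro t ht
    have hmin := hp (mem_univ ((1 - t) • p + t • z))
    simp only [mem_setOf_eq] at hmin
    have hgc : g ((1 - t) • p + t • z) ≤ (1 - t) * g p + t * g z := by
      have := hg.2 (mem_univ p) (mem_univ z)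
        (show (0:ℝ) ≤ 1 - t by linarith [ht.2]) ht.1.le (by ring : (1 - t) + t = 1)
      simpa using this
    have harg : (1 - t) • p + t • z - u = (p - u) + t • (z - p) := by
      rw [sub_smul, one_smul, smul_sub]; abel
    have hnorm : ‖(1 - t) • p + t • z - u‖ ^ 2
        = ‖p - u‖ ^ 2 + 2 * t * ⟪p - u, z - p⟫ + t ^ 2 * ‖z - p‖ ^ 2 := by
      rw [harg, @norm_add_sq_real, real_inner_smul_right, norm_smul, Real.norm_eq_abs,
        abs_of_pos ht.1]
      ring
    have hmin' : g p + ‖p - u‖ ^ 2 / (2 * μ) ≤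
        ((1 - t) * g p + t * g z) + ‖(1 - t) • p + t • z - u‖ ^ 2 / (2 * μ) := by
      refine le_trans hmin ?_
      gcongr
    rw [hnorm] at hmin'
    have hexp : (‖p - u‖ ^ 2 + 2 * t * ⟪p - u, z - p⟫ + t ^ 2 * ‖z - p‖ ^ 2) / (2 * μ)
        = ‖p - u‖ ^ 2 / (2 * μ) + t * (⟪p - u, z - p⟫ / μ)
          + t * (t * (‖z - p‖ ^ 2 / (2 * μ))) := by
      field_simp
    rw [hexp] at hmin'
    have hexpand : (1 - t) * g p = g p - t * g p := by ring
    have hTX : t * (g z - g p + ⟪p - u, z - p⟫ / μ + t * (‖z - p‖ ^ 2 / (2 * μ)))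
        = t * g z - t * g p + t * (⟪p - u, z - p⟫ / μ)
          + t * (t * (‖z - p‖ ^ 2 / (2 * μ))) := by ring
    have hT0 : t * 0 ≤ t * (g z - g p + ⟪p - u, z - p⟫ / μ
        + t * (‖z - p‖ ^ 2 / (2 * μ))) := by
      rw [mul_zero, hTX]
      linarith [hmin', hexpand]
    exact le_of_mul_le_mul_left hT0 ht.1
  have hD : 0 ≤ ‖z - p‖ ^ 2 / (2 * μ) := by positivity
  have hC : 0 ≤ g z - g p + ⟪p - u, z - p⟫ / μ := by
    by_contra hneg
    push_neg at hneg
    set C := g z - g p + ⟪p - u, z - p⟫ / μ with hCdef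
    set D := ‖z - p‖ ^ 2 / (2 * μ) with hDdef
    clear_value C D
    rcases eq_or_lt_of_le hD with hD0 | hD0
    · have h1 := key 1 (by constructor <;> norm_num)
      rw [← hD0] at h1
      simp at h1
      linarith
    · have htmem : min 1 (-C / (2 * D)) ∈ Ioc (0:ℝ) 1 := by
        constructor
        · exact lt_min one_pos (div_pos (by linarith) (by linarith))
        · exact min_le_left _ _
      have hk := key _ htmem
      have hle : min 1 (-C / (2 * D)) * D ≤ (-C / (2 * D)) * D :=
        mul_le_mul_of_nonneg_right (min_le_right _ _) hD0.le
      have hCD : (-C / (2 * D)) * D = -C / 2 := by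
        field_simp
      have hfin : (0:ℝ) ≤ C + -C / 2 := le_trans hk (by linarith [hle, hCD])
      linarith [hfin, hneg]
  have hswap : ⟪p - u, z - p⟫ = -⟪u - p, z - p⟫ := by
    rw [← inner_neg_left]; congr 1; abel
  rw [hswap] at hC
  have hnd : -⟪u - p, z - p⟫ / μ = -(⟪u - p, z - p⟫ / μ) := neg_div _ _
  rw [hnd] at hC
  linarith

lemma aux_sq_grad (c : ℝ) (x : E) :
    HasGradientAt (fun z : E => c / 2 * ‖z‖ ^ 2) (c • x) x := by
  have h0 : (fun z : E => c / 2 * ‖z‖ ^ 2) = fun z : E => c / 2 * ⟪z, z⟫ := by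
    funext z; rw [real_inner_self_eq_norm_sq]
  have h := ((hasFDerivAt_id x).inner ℝ (hasFDerivAt_id x)).const_mul (c / 2)
  have hdual : (InnerProductSpace.toDual ℝ E) (c • x)
      = (c / 2) • ((fderivInnerCLM ℝ (x, x)).comp
        ((ContinuousLinearMap.id ℝ E).prod (ContinuousLinearMap.id ℝ E))) := by
    ext w
    rw [ContinuousLinearMap.smul_apply, ContinuousLinearMap.comp_apply,
      ContinuousLinearMap.prod_apply, fderivInnerCLM_apply]
    simp only [InnerProductSpace.toDual_apply_apply, real_inner_smul_left, smul_eq_mul,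
      ContinuousLinearMap.coe_id', id_eq]
    rw [real_inner_comm w x]
    ring
  have h2 : HasFDerivAt (fun z : E => c / 2 * ‖z‖ ^ 2)
      ((InnerProductSpace.toDual ℝ E) (c • x)) x := by
    rw [h0, hdual]
    simpa using h
  have h3 := hasFDerivAt_iff_hasGradientAt.mp h2
  simpa using h3

lemma aux_grad_sub {φ ψ : E → ℝ} {a b x : E}
    (h1 : HasGradientAt φ a x) (h2 : HasGradientAt ψ b x) :
    HasGradientAt (fun z => φ z - ψ z) (a - b) x := by
  rw [hasGradientAt_iff_hasFDerivAt] at h1 h2 ⊢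
  simp only [map_sub]; exact h1.sub h2

/-- the forward (gradient) step is a `(1 - μ m)`-contraction when `μ = 1/(2L)` -/
lemma aux_forward_contraction {f : E → ℝ} {m L μ : ℝ}
    (hm : 0 < m) (hL : 0 < L) (hmL : m ≤ L) (hμ : μ = 1 / (2 * L))
    (hfC1 : ContDiff ℝ 1 f)
    (hfsc : ConvexOn ℝ univ (fun x => f x - m / 2 * ‖x‖ ^ 2))
    (hfLip : ∀ x y, ‖gradient f x - gradient f y‖ ≤ L * ‖x - y‖) (x y : E) :
    ‖(x - μ • gradient f x) - (y - μ • gradient f y)‖ ≤ (1 - μ * m) * ‖x - y‖ := by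
  set ℓ : ℝ := 2 * L - m with hℓdef
  have hℓ : 0 < ℓ := by rw [hℓdef]; linarith
  have hgradf : ∀ z, HasGradientAt f (gradient f z) z := fun z =>
    ((hfC1.differentiable one_ne_zero) z).hasGradientAt
  set φ' : E → E := fun z => gradient f z - m • z with hφ'
  have hgradh : ∀ z, HasGradientAt (fun x => f x - m / 2 * ‖x‖ ^ 2) (φ' z) z :=
    fun z => aux_grad_sub (hgradf z) (aux_sq_grad m z)
  have hub : ∀ a b : E, (fun x => f x - m / 2 * ‖x‖ ^ 2) b
      ≤ (fun x => f x - m / 2 * ‖x‖ ^ 2) a + ⟪φ' a, b - a⟫ + ℓ / 2 * ‖b - a‖ ^ 2 := by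
    intro a b
    simp only []
    have hdesc := aux_descent hL hgradf hfLip a b
    have hsq : ‖b‖ ^ 2 = ‖a‖ ^ 2 + 2 * ⟪a, b - a⟫ + ‖b - a‖ ^ 2 := by
      have : b = a + (b - a) := by abel
      rw [this, @norm_add_sq_real]
      abel_nf
    have hin : ⟪φ' a, b - a⟫ = ⟪gradient f a, b - a⟫ - m * ⟪a, b - a⟫ := by
      rw [hφ', inner_sub_left, real_inner_smul_left]
    rw [hin, hsq]
    have hnn : 0 ≤ ‖b - a‖ ^ 2 := sq_nonneg _
    have hcoef : L / 2 - m / 2 ≤ ℓ / 2 := by rw [hℓdef]; linarith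
    nlinarith [hdesc, hnn, hcoef]
  have hcoco := aux_coco hℓ hfsc hgradh hub x y
  set e := x - y with he
  set Δh := φ' x - φ' y with hΔh
  have hμpos : 0 < μ := by rw [hμ]; positivity
  have hμℓ : 1 - μ * m = μ * ℓ := by
    rw [hμ, hℓdef]; field_simp
  have hkey : (x - μ • gradient f x) - (y - μ • gradient f y)
      = (1 - μ * m) • e - μ • Δh := by
    rw [hΔh, hφ', he]
    module
  have hnormsq : ‖(1 - μ * m) • e - μ • Δh‖ ^ 2
      = (1 - μ * m) ^ 2 * ‖e‖ ^ 2 - 2 * (μ * (1 - μ * m)) * ⟪Δh, e⟫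
        + μ ^ 2 * ‖Δh‖ ^ 2 := by
    rw [@norm_sub_sq_real, real_inner_smul_left, real_inner_smul_right, norm_smul, norm_smul,
      Real.norm_eq_abs, Real.norm_eq_abs, abs_of_pos hμpos]
    rw [real_inner_comm]
    have : |1 - μ * m| = 1 - μ * m := by
      rw [abs_of_nonneg]; rw [hμℓ]; positivity
    rw [this]
    ring
  have hcoco' : μ ^ 2 * ‖Δh‖ ^ 2 ≤ μ * (1 - μ * m) * ⟪Δh, e⟫ := by
    have h1 : ‖Δh‖ ^ 2 / ℓ ≤ ⟪Δh, e⟫ := hcoco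
    calc μ ^ 2 * ‖Δh‖ ^ 2 = (μ * μ * ℓ) * (‖Δh‖ ^ 2 / ℓ) := by
          field_simp
      _ ≤ (μ * μ * ℓ) * ⟪Δh, e⟫ := by
          apply mul_le_mul_of_nonneg_left h1 (by positivity)
      _ = μ * (1 - μ * m) * ⟪Δh, e⟫ := by rw [hμℓ]; ring
  have hsqle : ‖(x - μ • gradient f x) - (y - μ • gradient f y)‖ ^ 2
      ≤ ((1 - μ * m) * ‖e‖) ^ 2 := by
    rw [hkey, hnormsq]
    nlinarith [hcoco']
  have h1μm : 0 ≤ 1 - μ * m := by rw [hμℓ]; positivity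
  have hrhs : 0 ≤ (1 - μ * m) * ‖e‖ := mul_nonneg h1μm (norm_nonneg _)
  nlinarith [hsqle, norm_nonneg ((x - μ • gradient f x) - (y - μ • gradient f y)), hrhs]

lemma aux_prox_mono {g : E → ℝ} {μ : ℝ} (hg : ConvexOn ℝ univ g) (hμ : 0 < μ)
    {u v p q : E} (hp : IsMinOn (fun z => g z + ‖z - u‖ ^ 2 / (2 * μ)) univ p)
    (hq : IsMinOn (fun z => g z + ‖z - v‖ ^ 2 / (2 * μ)) univ q) :
    ‖p - q‖ ≤ ‖u - v‖ := by
  have h1 := aux_prox_subgrad hg hμ hp q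
  have h2 := aux_prox_subgrad hg hμ hq p
  have hsum : ⟪u - p, q - p⟫ + ⟪v - q, p - q⟫ ≤ 0 := by
    by_contra hcon
    push_neg at hcon
    have : 0 < (⟪u - p, q - p⟫ + ⟪v - q, p - q⟫) / μ := div_pos hcon hμ
    rw [add_div] at this
    linarith
  have hinner : ‖p - q‖ ^ 2 ≤ ⟪u - v, p - q⟫ := by
    have e0 : q - p = -(p - q) := by abel
    have e1 : ⟪u - p, q - p⟫ = -⟪u - p, p - q⟫ := by rw [e0, inner_neg_right]
    have e2 : ⟪(v - q) - (u - p), p - q⟫ = ⟪v - q, p - q⟫ - ⟪u - p, p - q⟫ :=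
      inner_sub_left _ _ _
    have e3 : (v - q) - (u - p) = -(u - v) + (p - q) := by abel
    have e4 : ⟪-(u - v) + (p - q), p - q⟫ = -⟪u - v, p - q⟫ + ‖p - q‖ ^ 2 := by
      rw [inner_add_left, inner_neg_left, real_inner_self_eq_norm_sq]
    have e5 : ⟪(v - q) - (u - p), p - q⟫ = ⟪-(u - v) + (p - q), p - q⟫ := by rw [e3]
    linarith [hsum, e1, e2, e5, e4]
  have hcs : ⟪u - v, p - q⟫ ≤ ‖u - v‖ * ‖p - q‖ := real_inner_le_norm _ _
  rcases eq_or_lt_of_le (norm_nonneg (p - q)) with h0 | h0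
  · rw [← h0]; exact norm_nonneg _
  · nlinarith [hinner, hcs, h0]

set_option maxHeartbeats 1000000 in
/-- Lemma 1, forward–backward case: global exponential
stability of the proximal gradient (forward–backward) flow with rate `αm` for
an `m`-strongly convex `f` with `L`-Lipschitz gradient and `μ = 1/(2L)`. -/
theorem FB_flow_exponential_stability {n : ℕ}
    (f g F : EuclideanSpace ℝ (Fin n) → ℝ)
    (m L μ α : ℝ)
    (hm : 0 < m) (hL : 0 < L)
    (hfC1 : ContDiff ℝ 1 f)
    (hfsc : ConvexOn ℝ univ (fun x => f x - m / 2 * ‖x‖ ^ 2))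
    (hfLip : ∀ x y, ‖gradient f x - gradient f y‖ ≤ L * ‖x - y‖)
    (hgconv : ConvexOn ℝ univ g) (hglsc : LowerSemicontinuous g)
    (hF : ∀ x, F x = f x + g x)
    (hμ : μ = 1 / (2 * L)) (hα : 0 < α)
    (proxg : EuclideanSpace ℝ (Fin n) → EuclideanSpace ℝ (Fin n))
    (hproxg : ∀ v, IsMinOn (fun z => g z + ‖z - v‖ ^ 2 / (2 * μ)) univ (proxg v))
    (G : EuclideanSpace ℝ (Fin n) → EuclideanSpace ℝ (Fin n))
    (hG : ∀ x, G x = μ⁻¹ • (x - proxg (x - μ • gradient f x))) :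
    ∃ c > (0 : ℝ), ∀ x v : ℝ → EuclideanSpace ℝ (Fin n),
      (∀ t ∈ Ici (0 : ℝ), HasDerivWithinAt x (v t) (Ici 0) t) →
      ContinuousOn v (Ici 0) →
      (∀ t ∈ Ici (0 : ℝ), v t = -(α • G (x t))) →
      ∀ xs, IsMinOn F univ xs →
        ∀ t ∈ Ici (0 : ℝ),
          ‖x t - xs‖ ≤ c * Real.exp (-(α * m) * t) * ‖x 0 - xs‖ := by
  refine ⟨1, one_pos, ?_⟩
  intro x v hx hv hveq xs hxs t ht
  rcases subsingleton_or_nontrivial (EuclideanSpace ℝ (Fin n)) with hsub | hnt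
  · have h0 : x t - xs = 0 := Subsingleton.elim _ _
    have h0' : x 0 - xs = 0 := Subsingleton.elim _ _
    rw [h0, h0', norm_zero]
    positivity
  · -- basic facts
    have hμpos : 0 < μ := by rw [hμ]; positivity
    have hgradf : ∀ z, HasGradientAt f (gradient f z) z := fun z =>
      ((hfC1.differentiable one_ne_zero) z).hasGradientAt
    set φ' : EuclideanSpace ℝ (Fin n) → EuclideanSpace ℝ (Fin n) :=
      fun z => gradient f z - m • z with hφ'
    have hgradh : ∀ z, HasGradientAt (fun x => f x - m / 2 * ‖x‖ ^ 2) (φ' z) z :=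
      fun z => aux_grad_sub (hgradf z) (aux_sq_grad m z)
    -- m ≤ L
    have hmL : m ≤ L := by
      obtain ⟨e0, he0⟩ := exists_ne (0 : EuclideanSpace ℝ (Fin n))
      have h1 := aux_grad_ineq hfsc hgradh 0 e0
      have h2 := aux_grad_ineq hfsc hgradh e0 0
      simp only [sub_zero, zero_sub] at h1 h2
      have h2' : ⟪φ' e0, -e0⟫ = -⟪φ' e0, e0⟫ := inner_neg_right _ _
      have hdiff : φ' e0 - φ' 0 = (gradient f e0 - gradient f 0) - m • e0 := by
        rw [hφ']; simp only [smul_zero]; abel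
      have hsum : 0 ≤ ⟪φ' e0 - φ' 0, e0⟫ := by
        rw [inner_sub_left]; linarith [h1, h2, h2']
      rw [hdiff, inner_sub_left, real_inner_smul_left, real_inner_self_eq_norm_sq] at hsum
      have hcs : ⟪gradient f e0 - gradient f 0, e0⟫ ≤ L * ‖e0‖ * ‖e0‖ := by
        calc ⟪gradient f e0 - gradient f 0, e0⟫ ≤ ‖gradient f e0 - gradient f 0‖ * ‖e0‖ :=
              real_inner_le_norm _ _
          _ ≤ (L * ‖e0 - 0‖) * ‖e0‖ := by gcongr; exact hfLip e0 0
          _ = L * ‖e0‖ * ‖e0‖ := by rw [sub_zero]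
      have hnorm0 : 0 < ‖e0‖ := norm_pos_iff.mpr he0
      rw [pow_two] at hsum
      nlinarith [hsum, hcs, mul_pos hnorm0 hnorm0]
    -- the minimizer is a fixed point of the prox-gradient map
    have hfix : proxg (xs - μ • gradient f xs) = xs := by
      set u := xs - μ • gradient f xs with hu
      set p := proxg u with hp
      have hsub := aux_prox_subgrad hgconv hμpos (hproxg u) xs
      rw [← hp] at hsub
      have hup : u - p = (xs - p) - μ • gradient f xs := by rw [hu]; abel
      have hinner : ⟪u - p, xs - p⟫
          = ‖xs - p‖ ^ 2 - μ * ⟪gradient f xs, xs - p⟫ := by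
        rw [hup, inner_sub_left, real_inner_smul_left, real_inner_self_eq_norm_sq]
      have hdivi : (‖xs - p‖ ^ 2 - μ * ⟪gradient f xs, xs - p⟫) / μ
          = ‖xs - p‖ ^ 2 / μ - ⟪gradient f xs, xs - p⟫ := by
        field_simp
      rw [hinner, hdivi] at hsub
      have hmin := hxs (mem_univ p)
      simp only [mem_setOf_eq] at hmin
      rw [hF, hF] at hmin
      have hdesc := aux_descent hL hgradf hfLip xs p
      have hneg : ⟪gradient f xs, p - xs⟫ = -⟪gradient f xs, xs - p⟫ := by
        rw [show p - xs = -(xs - p) by abel, inner_neg_right]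
      rw [hneg] at hdesc
      have hnrev : ‖p - xs‖ = ‖xs - p‖ := norm_sub_rev _ _
      rw [hnrev] at hdesc
      have hdiv2 : ‖xs - p‖ ^ 2 / μ = 2 * L * ‖xs - p‖ ^ 2 := by
        rw [hμ]; field_simp
      rw [hdiv2] at hsub
      have hN : ‖xs - p‖ ^ 2 ≤ 0 := by nlinarith [hsub, hmin, hdesc, hL]
      have h00 : ‖xs - p‖ ^ 2 = 0 := le_antisymm hN (sq_nonneg _)
      have h01 : ‖xs - p‖ = 0 := by
        have := sq_eq_zero_iff.mp h00
        exact this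
      have h02 := sub_eq_zero.mp (norm_eq_zero.mp h01)
      rw [hp] at h02 ⊢
      exact h02.symm
    -- strong monotonicity of G relative to xs
    have hGmono : ∀ z, m * ‖z - xs‖ ^ 2 ≤ ⟪G z, z - xs⟫ := by
      intro z
      set p := proxg (z - μ • gradient f z) with hp
      have hnonexp := aux_prox_mono hgconv hμpos (hproxg (z - μ • gradient f z))
        (hproxg (xs - μ • gradient f xs))
      rw [hfix] at hnonexp
      have hcontr := aux_forward_contraction hm hL hmL hμ hfC1 hfsc hfLip z xs
      have hpq : ‖p - xs‖ ≤ (1 - μ * m) * ‖z - xs‖ := le_trans hnonexp hcontr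
      have hGz : ⟪G z, z - xs⟫ = μ⁻¹ * ⟪z - p, z - xs⟫ := by
        rw [hG z, real_inner_smul_left, hp]
      have hzp : z - p = (z - xs) - (p - xs) := by abel
      have hinner : ⟪z - p, z - xs⟫ = ‖z - xs‖ ^ 2 - ⟪p - xs, z - xs⟫ := by
        rw [hzp, inner_sub_left, real_inner_self_eq_norm_sq]
      have hcs : ⟪p - xs, z - xs⟫ ≤ (1 - μ * m) * ‖z - xs‖ ^ 2 := by
        calc ⟪p - xs, z - xs⟫ ≤ ‖p - xs‖ * ‖z - xs‖ := real_inner_le_norm _ _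
          _ ≤ ((1 - μ * m) * ‖z - xs‖) * ‖z - xs‖ :=
              mul_le_mul_of_nonneg_right hpq (norm_nonneg _)
          _ = (1 - μ * m) * ‖z - xs‖ ^ 2 := by ring
      have hlow : μ * (m * ‖z - xs‖ ^ 2) ≤ ⟪z - p, z - xs⟫ := by
        rw [hinner]; nlinarith [hcs]
      rw [hGz]
      calc m * ‖z - xs‖ ^ 2 = μ⁻¹ * (μ * (m * ‖z - xs‖ ^ 2)) := by
            field_simp
        _ ≤ μ⁻¹ * ⟪z - p, z - xs⟫ :=
            mul_le_mul_of_nonneg_left hlow (by positivity)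
    -- Lyapunov argument
    set ψ : ℝ → ℝ := fun s => Real.exp (2 * (α * m) * s) * ⟪x s - xs, x s - xs⟫ with hψ
    have hxc : ContinuousOn x (Ici 0) := fun s hs => (hx s hs).continuousWithinAt
    have hψc : ContinuousOn ψ (Ici 0) := by
      apply ContinuousOn.mul
      · exact (Real.continuous_exp.comp (continuous_const.mul continuous_id)).continuousOn
      · exact (hxc.sub continuousOn_const).inner (hxc.sub continuousOn_const)
    have hψanti : AntitoneOn ψ (Ici 0) := by
      apply antitoneOn_of_hasDerivWithinAt_nonpos (convex_Ici 0) hψc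
        (f' := fun s => Real.exp (2 * (α * m) * s) * (2 * (α * m)) * ⟪x s - xs, x s - xs⟫
          + Real.exp (2 * (α * m) * s) * (⟪x s - xs, v s⟫ + ⟪v s, x s - xs⟫))
      · intro s hs
        rw [interior_Ici] at hs
        have hxd : HasDerivAt x (v s) s :=
          (hx s (mem_Ici.mpr (le_of_lt (mem_Ioi.mp hs)))).hasDerivAt (Ici_mem_nhds hs)
        have hinner : HasDerivAt (fun r => ⟪x r - xs, x r - xs⟫)
            (⟪x s - xs, v s⟫ + ⟪v s, x s - xs⟫) s :=
          (hxd.sub_const xs).inner ℝ (hxd.sub_const xs)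
        have hexp : HasDerivAt (fun r => Real.exp (2 * (α * m) * r))
            (Real.exp (2 * (α * m) * s) * (2 * (α * m))) s := by
          have h0 : HasDerivAt (fun r : ℝ => 2 * (α * m) * r) (2 * (α * m)) s := by
            simpa using (hasDerivAt_id s).const_mul (2 * (α * m))
          exact h0.exp
        exact (hexp.mul hinner).hasDerivWithinAt
      · intro s hs
        rw [interior_Ici] at hs
        have hvs := hveq s (mem_Ici.mpr (le_of_lt (mem_Ioi.mp hs)))
        have hGs := hGmono (x s)
        have hvinner : ⟪v s, x s - xs⟫ = -(α * ⟪G (x s), x s - xs⟫) := by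
          rw [hvs, inner_neg_left, real_inner_smul_left]
        have hsq : ⟪x s - xs, x s - xs⟫ = ‖x s - xs‖ ^ 2 := real_inner_self_eq_norm_sq _
        have hcomm : ⟪x s - xs, v s⟫ = ⟪v s, x s - xs⟫ := real_inner_comm _ _
        have hepos : 0 < Real.exp (2 * (α * m) * s) := Real.exp_pos _
        rw [hcomm, hvinner, hsq]
        have hbound : α * ⟪G (x s), x s - xs⟫ ≥ α * (m * ‖x s - xs‖ ^ 2) :=
          mul_le_mul_of_nonneg_left hGs (le_of_lt hα)
        nlinarith [hbound, hepos, sq_nonneg ‖x s - xs‖]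
    have hψle := hψanti (self_mem_Ici) ht ht
    have hψ0 : ψ 0 = ⟪x 0 - xs, x 0 - xs⟫ := by
      rw [hψ]; simp
    rw [hψ0] at hψle
    have hsq1 : ⟪x t - xs, x t - xs⟫ = ‖x t - xs‖ ^ 2 := real_inner_self_eq_norm_sq _
    have hsq2 : ⟪x 0 - xs, x 0 - xs⟫ = ‖x 0 - xs‖ ^ 2 := real_inner_self_eq_norm_sq _
    have hψt : Real.exp (2 * (α * m) * t) * ‖x t - xs‖ ^ 2 ≤ ‖x 0 - xs‖ ^ 2 := by
      rw [← hsq1, ← hsq2]; exact hψle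
    -- conclude
    set A := ‖x t - xs‖ with hA
    set B := ‖x 0 - xs‖ with hB
    set E1 := Real.exp (α * m * t) with hE1
    have hE1pos : 0 < E1 := Real.exp_pos _
    have hexp2 : Real.exp (2 * (α * m) * t) = E1 ^ 2 := by
      rw [hE1, ← Real.exp_nat_mul]; ring_nf
    rw [hexp2] at hψt
    have hEA : E1 * A ≤ B := by
      nlinarith [hψt, norm_nonneg (x t - xs), norm_nonneg (x 0 - xs), hE1pos,
        mul_pos hE1pos hE1pos]
    have hexpneg : Real.exp (-(α * m) * t) = E1⁻¹ := by
      rw [hE1, ← Real.exp_neg]; ring_nf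
    rw [one_mul, hexpneg, inv_mul_eq_div, le_div_iff₀ hE1pos]
    linarith [hEA]
end
end

section
/- Let f : ℝⁿ → ℝ be continuously differentiable and convex with L-Lipschitz gradient, let g : ℝⁿ → ℝ be convex and lower semicontinuous, and let μ ∈ (0, 1/L). Then inf F = inf F_μ (as extended-real infima over ℝⁿ), and a point x⋆ ∈ ℝⁿ minimizes F = f + g if and only if it minimizes the forward–backward envelope F_μ. -/
open Set RealInnerProductSpace

noncomputable section

section FBaux

variable {E : Type*} [NormedAddCommGroup E] [InnerProductSpace ℝ E] [CompleteSpace E]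

lemma FBaux_inner_grad (f : E → ℝ) (y v : E) : ⟪gradient f y, v⟫ = fderiv ℝ f y v := by
  unfold gradient
  exact InnerProductSpace.toDual_symm_apply

lemma FBaux_line_hasDerivAt (f : E → ℝ) (hf : ContDiff ℝ 1 f) (x v : E) (t : ℝ) :
    HasDerivAt (fun s : ℝ => f (x + s • v)) ⟪gradient f (x + t • v), v⟫ t := by
  have h1 : HasDerivAt (fun s : ℝ => x + s • v) v t := by
    simpa using ((hasDerivAt_id t).smul_const v).const_add x
  have h2 : HasFDerivAt f (fderiv ℝ f (x + t • v)) (x + t • v) :=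
    (hf.differentiable one_ne_zero (x + t • v)).hasFDerivAt
  have h3 := h2.comp_hasDerivAt t h1
  simpa [Function.comp_def, FBaux_inner_grad] using h3

lemma FBaux_convex_ineq (f : E → ℝ) (hf : ContDiff ℝ 1 f) (hconv : ConvexOn ℝ univ f)
    (x z : E) : f x + ⟪gradient f x, z - x⟫ ≤ f z := by
  have hq0 : HasDerivAt (fun t : ℝ => f (x + t • (z - x))) ⟪gradient f x, z - x⟫ 0 := by
    simpa using FBaux_line_hasDerivAt f hf x (z - x) 0
  have hqc : ConvexOn ℝ univ fun t : ℝ => f (x + t • (z - x)) := by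
    have h := hconv.comp_affineMap (AffineMap.lineMap x z : ℝ →ᵃ[ℝ] E)
    have he : (fun t : ℝ => f (x + t • (z - x)))
        = (f ∘ (AffineMap.lineMap x z : ℝ →ᵃ[ℝ] E)) := by
      funext t
      simp only [Function.comp_apply, AffineMap.lineMap_apply, vsub_eq_sub, vadd_eq_add]
      congr 1
      abel
    rw [he]
    simpa using h
  have hs := hqc.le_slope_of_hasDerivAt (mem_univ (0:ℝ)) (mem_univ 1) one_pos hq0
  rw [slope_def_field] at hs
  simp only [one_smul, zero_smul, add_zero, add_sub_cancel, sub_zero, div_one] at hs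
  linarith

lemma FBaux_descent (f : E → ℝ) (hf : ContDiff ℝ 1 f) {L : ℝ}
    (hLip : ∀ x y, ‖gradient f x - gradient f y‖ ≤ L * ‖x - y‖) (x z : E) :
    f z ≤ f x + ⟪gradient f x, z - x⟫ + L / 2 * ‖z - x‖ ^ 2 := by
  set v := z - x with hv
  set φ : ℝ → ℝ :=
    fun t => f x + t * ⟪gradient f x, v⟫ + L * t ^ 2 / 2 * ‖v‖ ^ 2 - f (x + t • v) with hφ
  have hd : ∀ t : ℝ, HasDerivAt φ
      (⟪gradient f x, v⟫ + L * t * ‖v‖ ^ 2 - ⟪gradient f (x + t • v), v⟫) t := by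
    intro t
    have h1 := FBaux_line_hasDerivAt f hf x v t
    have h2a : HasDerivAt (fun t : ℝ => f x + t * ⟪gradient f x, v⟫)
        ⟪gradient f x, v⟫ t := by
      simpa using ((hasDerivAt_id t).mul_const ⟪gradient f x, v⟫).const_add (f x)
    have h2b : HasDerivAt (fun t : ℝ => L * t ^ 2 / 2 * ‖v‖ ^ 2)
        (L * t * ‖v‖ ^ 2) t := by
      have h := (hasDerivAt_pow 2 t).const_mul (L / 2 * ‖v‖ ^ 2)
      have he : (fun t : ℝ => L / 2 * ‖v‖ ^ 2 * t ^ 2)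
          = fun t : ℝ => L * t ^ 2 / 2 * ‖v‖ ^ 2 := by funext s; ring
      rw [he] at h
      exact h.congr_deriv (by norm_num; ring)
    have := (h2a.add h2b).sub h1
    exact this
  have hmono : MonotoneOn φ (Icc (0:ℝ) 1) := by
    apply monotoneOn_of_deriv_nonneg (convex_Icc 0 1)
    · exact fun t _ => (hd t).differentiableAt.continuousAt.continuousWithinAt
    · exact fun t _ => (hd t).differentiableAt.differentiableWithinAt
    · intro t ht
      rw [interior_Icc] at ht
      rw [(hd t).deriv]
      have h1 : |⟪gradient f x - gradient f (x + t • v), v⟫|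
          ≤ ‖gradient f x - gradient f (x + t • v)‖ * ‖v‖ := abs_real_inner_le_norm _ _
      have h2 : ‖gradient f x - gradient f (x + t • v)‖ ≤ L * (t * ‖v‖) := by
        have h := hLip x (x + t • v)
        have hn : ‖x - (x + t • v)‖ = t * ‖v‖ := by
          rw [show x - (x + t • v) = -(t • v) by abel, norm_neg, norm_smul,
            Real.norm_eq_abs, abs_of_nonneg ht.1.le]
        rwa [hn] at h
      have h3 : ⟪gradient f x, v⟫ - ⟪gradient f (x + t • v), v⟫
          = ⟪gradient f x - gradient f (x + t • v), v⟫ := (inner_sub_left _ _ _).symm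
      have h4 : -(‖gradient f x - gradient f (x + t • v)‖ * ‖v‖)
          ≤ ⟪gradient f x - gradient f (x + t • v), v⟫ := neg_le_of_abs_le h1
      nlinarith [mul_le_mul_of_nonneg_right h2 (norm_nonneg v), norm_nonneg v]
  have h01 := hmono (left_mem_Icc.2 zero_le_one) (right_mem_Icc.2 zero_le_one) zero_le_one
  have hφ0 : φ 0 = 0 := by simp [hφ]
  have hφ1 : φ 1 = f x + ⟪gradient f x, v⟫ + L / 2 * ‖v‖ ^ 2 - f z := by
    have hz' : x + (1:ℝ) • v = z := by rw [one_smul, hv]; abel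
    simp only [hφ, hz', one_pow, mul_one, one_mul]
  rw [hφ0, hφ1] at h01
  linarith

lemma FBaux_minorant {E : Type*} [NormedAddCommGroup E] [NormedSpace ℝ E]
    [FiniteDimensional ℝ E] (g : E → ℝ) (hgconv : ConvexOn ℝ univ g) :
    ∃ C B : ℝ, 0 ≤ C ∧ ∀ z, B - C * ‖z‖ ≤ g z := by
  have hgc : Continuous g := by
    rw [← continuousOn_univ]; exact hgconv.continuousOn isOpen_univ
  obtain ⟨w, hw, hwmin⟩ := (isCompact_closedBall (0:E) 1).exists_isMinOn
    ⟨0, by simp⟩ hgc.continuousOn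
  have h0 : g w ≤ g 0 := hwmin (by simp)
  refine ⟨g 0 - g w, g w, by linarith, ?_⟩
  intro z
  rcases le_or_gt ‖z‖ 1 with h | h
  · have h1 : g w ≤ g z := hwmin (by simpa [Metric.mem_closedBall, dist_eq_norm] using h)
    nlinarith [norm_nonneg z]
  · set R := ‖z‖ with hR'
    have hR : 0 < R := lt_trans one_pos h
    have hRinv0 : 0 < R⁻¹ := inv_pos.2 hR
    have hRinv1 : R⁻¹ ≤ 1 := by
      rw [inv_le_one_iff₀]; right; exact h.le
    have key := hgconv.2 (mem_univ z) (mem_univ (0:E)) hRinv0.le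
      (by linarith : (0:ℝ) ≤ 1 - R⁻¹) (by ring)
    simp only [smul_zero, add_zero] at key
    have hmem : g w ≤ g (R⁻¹ • z) := hwmin (by
      simp only [Metric.mem_closedBall, dist_zero_right, norm_smul, Real.norm_eq_abs,
        abs_of_pos hRinv0]
      rw [← hR', inv_mul_cancel₀ hR.ne'])
    have key2 : R * g w ≤ g z + (R - 1) * g 0 := by
      have hh := mul_le_mul_of_nonneg_left (hmem.trans key) hR.le
      have he : R * (R⁻¹ * g z + (1 - R⁻¹) * g 0) = g z + (R - 1) * g 0 := by
        field_simp
      linarith [he ▸ hh]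
    linarith

lemma FBaux_ciInf_add_const {ι : Type*} [Nonempty ι] (h : ι → ℝ) (c : ℝ)
    (hb : BddBelow (Set.range h)) : (⨅ i, (h i + c)) = (⨅ i, h i) + c := by
  have hb2 : BddBelow (Set.range fun i => h i + c) := by
    obtain ⟨b, hbb⟩ := hb
    exact ⟨b + c, by rintro _ ⟨i, rfl⟩; exact add_le_add_left (hbb ⟨i, rfl⟩) c⟩
  apply le_antisymm
  · have h1 : ∀ i, (⨅ i, (h i + c)) - c ≤ h i := fun i => by
      have := ciInf_le hb2 i; linarith
    have h2 := le_ciInf h1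
    linarith
  · exact le_ciInf fun i => add_le_add_left (ciInf_le hb i) c

end FBaux

/-- the forward–backward envelope has the same infimum and
the same minimizers as the original composite objective `F = f + g`. -/
theorem FB_envelope_min_equivalence {n : ℕ}
    (f g F : EuclideanSpace ℝ (Fin n) → ℝ)
    (L μ : ℝ) (hL : 0 < L)
    (hfC1 : ContDiff ℝ 1 f)
    (hfconv : ConvexOn ℝ univ f)
    (hfLip : ∀ x y, ‖gradient f x - gradient f y‖ ≤ L * ‖x - y‖)
    (hgconv : ConvexOn ℝ univ g) (hglsc : LowerSemicontinuous g)
    (hF : ∀ x, F x = f x + g x)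
    (hμ : μ ∈ Ioo 0 (1 / L))
    (M : EuclideanSpace ℝ (Fin n) → ℝ)
    (hM : ∀ v, M v = ⨅ z : EuclideanSpace ℝ (Fin n), (g z + ‖z - v‖ ^ 2 / (2 * μ)))
    (Fμ : EuclideanSpace ℝ (Fin n) → ℝ)
    (hFμ : ∀ x, Fμ x = f x + M (x - μ • gradient f x) - μ / 2 * ‖gradient f x‖ ^ 2) :
    (⨅ x : EuclideanSpace ℝ (Fin n), (F x : EReal)) =
      (⨅ x : EuclideanSpace ℝ (Fin n), (Fμ x : EReal)) ∧
    ∀ xs : EuclideanSpace ℝ (Fin n), IsMinOn F univ xs ↔ IsMinOn Fμ univ xs := by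
  obtain ⟨hμ0, hμL⟩ := hμ
  have hμ2 : (0:ℝ) < 2 * μ := by linarith
  obtain ⟨c, hcpos, hcs⟩ : ∃ c : ℝ, 0 < c ∧ ∀ s : ℝ, c * s = s / (2 * μ) - L / 2 * s := by
    refine ⟨1 / (2 * μ) - L / 2, ?_, fun s => by ring⟩
    have hμL1 : μ * L < 1 := by
      have := (lt_div_iff₀ hL).1 hμL
      linarith
    rw [sub_pos, div_lt_div_iff₀ two_pos hμ2]
    nlinarith
  -- linear minorant of g
  obtain ⟨C, B, hC0, hCB⟩ := FBaux_minorant g hgconv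
  -- lower bound for the prox objective
  have hbd : ∀ v z : EuclideanSpace ℝ (Fin n),
      B - C * ‖v‖ - μ * C ^ 2 / 2 ≤ g z + ‖z - v‖ ^ 2 / (2 * μ) := by
    intro v z
    have h1 := hCB z
    have h2 : ‖z‖ ≤ ‖z - v‖ + ‖v‖ := by
      simpa using norm_add_le (z - v) v
    have h3 : C * ‖z - v‖ - μ * C ^ 2 / 2 ≤ ‖z - v‖ ^ 2 / (2 * μ) := by
      rw [le_div_iff₀ hμ2]
      nlinarith [sq_nonneg (‖z - v‖ - μ * C)]
    nlinarith [mul_le_mul_of_nonneg_left h2 hC0]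
  -- key norm identity
  have hnorm : ∀ x z : EuclideanSpace ℝ (Fin n),
      ‖z - (x - μ • gradient f x)‖ ^ 2
        = ‖z - x‖ ^ 2 + 2 * (μ * ⟪gradient f x, z - x⟫)
          + μ ^ 2 * ‖gradient f x‖ ^ 2 := by
    intro x z
    rw [show z - (x - μ • gradient f x) = (z - x) + μ • gradient f x by abel,
      norm_add_sq_real, real_inner_smul_right, real_inner_comm, norm_smul,
      Real.norm_eq_abs, mul_pow, sq_abs]
  -- BddBelow of the shifted prox objective
  have hbψ : ∀ x : EuclideanSpace ℝ (Fin n),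
      BddBelow (Set.range fun z =>
        g z + ‖z - x‖ ^ 2 / (2 * μ) + ⟪gradient f x, z - x⟫) := by
    intro x
    refine ⟨B - C * ‖x - μ • gradient f x‖ - μ * C ^ 2 / 2
      - μ / 2 * ‖gradient f x‖ ^ 2, ?_⟩
    rintro _ ⟨z, rfl⟩
    have h1 := hbd (x - μ • gradient f x) z
    have h2 : g z + ‖z - (x - μ • gradient f x)‖ ^ 2 / (2 * μ)
        = g z + ‖z - x‖ ^ 2 / (2 * μ) + ⟪gradient f x, z - x⟫
          + μ / 2 * ‖gradient f x‖ ^ 2 := by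
      rw [hnorm x z]
      field_simp
      ring
    linarith [h2 ▸ h1]
  -- representation of Fμ
  have hFμrep : ∀ x, Fμ x
      = (⨅ z, (g z + ‖z - x‖ ^ 2 / (2 * μ) + ⟪gradient f x, z - x⟫)) + f x := by
    intro x
    rw [hFμ x, hM]
    have h1 : (fun z => g z + ‖z - (x - μ • gradient f x)‖ ^ 2 / (2 * μ))
        = fun z => (g z + ‖z - x‖ ^ 2 / (2 * μ) + ⟪gradient f x, z - x⟫)
          + μ / 2 * ‖gradient f x‖ ^ 2 := by
      funext z
      rw [hnorm x z]
      field_simp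
      ring
    rw [h1, FBaux_ciInf_add_const _ _ (hbψ x)]
    ring
  -- lower bound: F z + c‖z-x‖² ≤ ψ x z + f x
  have hlow : ∀ x z : EuclideanSpace ℝ (Fin n),
      F z + c * ‖z - x‖ ^ 2
        ≤ (g z + ‖z - x‖ ^ 2 / (2 * μ) + ⟪gradient f x, z - x⟫) + f x := by
    intro x z
    have hd := FBaux_descent f hfC1 hfLip x z
    have he := hcs (‖z - x‖ ^ 2)
    rw [hF z]
    linarith
  -- Fμ ≤ F pointwise
  have hFμle : ∀ x, Fμ x ≤ F x := by
    intro x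
    rw [hFμrep x, hF x]
    have h1 := ciInf_le (hbψ x) x
    simp only [sub_self, norm_zero, inner_zero_right] at h1
    have h2 : (0:ℝ) ^ 2 / (2 * μ) = 0 := by simp
    rw [h2, add_zero, add_zero] at h1
    linarith
  -- any uniform lower bound of F is a lower bound of Fμ
  have hFμge : ∀ (x : EuclideanSpace ℝ (Fin n)) (r : ℝ), (∀ z, r ≤ F z) → r ≤ Fμ x := by
    intro x r hr
    rw [hFμrep x]
    have h1 : ∀ z, r - f x
        ≤ g z + ‖z - x‖ ^ 2 / (2 * μ) + ⟪gradient f x, z - x⟫ := by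
      intro z
      have := hlow x z
      nlinarith [hr z, mul_nonneg hcpos.le (sq_nonneg ‖z - x‖)]
    have h2 := le_ciInf h1
    linarith
  constructor
  · -- equality of infima in EReal
    apply le_antisymm
    · apply le_iInf
      intro x
      by_contra hcon
      push_neg at hcon
      obtain ⟨r, hr1, hr2⟩ := EReal.exists_between_coe_real hcon
      have hrF : ∀ z, r ≤ F z := by
        intro z
        have h := hr2.trans_le (iInf_le _ z)
        exact_mod_cast h.le
      have : r ≤ Fμ x := hFμge x r hrF
      have : (r : EReal) ≤ (Fμ x : EReal) := by exact_mod_cast this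
      exact absurd this (not_le.2 hr1)
    · exact iInf_mono fun x => by exact_mod_cast hFμle x
  · intro xs
    rw [isMinOn_univ_iff, isMinOn_univ_iff]
    constructor
    · intro h y
      have h1 : F xs ≤ Fμ y := hFμge y (F xs) h
      linarith [hFμle xs]
    · intro h y
      have hkey : F xs ≤ Fμ xs := by
        by_contra hlt
        push_neg at hlt
        have hlsc : LowerSemicontinuous F := by
          have hfc : Continuous f := hfC1.continuous
          have hl : LowerSemicontinuous fun x => f x + g x :=
            hfc.lowerSemicontinuous.add hglsc
          have : F = fun x => f x + g x := funext hF
          rwa [this]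
        have hy : (Fμ xs + F xs) / 2 < F xs := by linarith
        obtain ⟨ε, hε, hball⟩ := Metric.eventually_nhds_iff.1 (hlsc xs _ hy)
        set δ : ℝ := min ((F xs - Fμ xs) / 2) (c * ε ^ 2) with hδ
        have hδ0 : 0 < δ := lt_min (by linarith) (by positivity)
        have hδ1 : δ ≤ (F xs - Fμ xs) / 2 := min_le_left _ _
        have hδ2 : δ ≤ c * ε ^ 2 := min_le_right _ _
        have hiInf : (⨅ z, (g z + ‖z - xs‖ ^ 2 / (2 * μ) + ⟪gradient f xs, z - xs⟫))
            < Fμ xs - f xs + δ := by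
          have := hFμrep xs
          linarith
        obtain ⟨z, hz⟩ := exists_lt_of_ciInf_lt hiInf
        have h1 := hlow xs z
        have h2 : Fμ xs ≤ F z := le_trans (h z) (hFμle z)
        have h3 : c * ‖z - xs‖ ^ 2 < δ := by linarith
        have h4 : ‖z - xs‖ ^ 2 < ε ^ 2 := by
          have := h3.trans_le hδ2
          nlinarith
        have h5 : ‖z - xs‖ < ε := by
          nlinarith [norm_nonneg (z - xs)]
        have h6 : (Fμ xs + F xs) / 2 < F z := hball (by rwa [dist_eq_norm])
        have h7 : F z < Fμ xs + δ := by nlinarith [mul_nonneg hcpos.le (sq_nonneg ‖z - xs‖)]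
        linarith
      calc F xs ≤ Fμ xs := hkey
        _ ≤ Fμ y := h y
        _ ≤ F y := hFμle y
end
end

section
/- Let f : ℝⁿ → ℝ be continuously differentiable and convex with L-Lipschitz gradient, let g : ℝⁿ → ℝ be convex and lower semicontinuous, and let μ ∈ (0, 1/L). Then for every x ∈ ℝⁿ: F(p_μ(x)) ≤ F_μ(x) ≤ F(x), where F = f + g and p_μ(x) = prox_{μg}(x − μ∇f(x)). -/
open Set RealInnerProductSpace

noncomputable section

lemma descent_lemma {n : ℕ} (f : EuclideanSpace ℝ (Fin n) → ℝ)
    (hf : ContDiff ℝ 1 f) (L : ℝ) (hL : 0 ≤ L)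
    (hLip : ∀ x y, ‖gradient f x - gradient f y‖ ≤ L * ‖x - y‖)
    (x y : EuclideanSpace ℝ (Fin n)) :
    f y ≤ f x + ⟪gradient f x, y - x⟫ + L / 2 * ‖y - x‖ ^ 2 := by
  set d := y - x with hd
  have hdiff : ∀ z, HasFDerivAt f (InnerProductSpace.toDual ℝ _ (gradient f z)) z := by
    intro z
    exact hasGradientAt_iff_hasFDerivAt.mp ((hf.differentiable one_ne_zero z).hasGradientAt)
  have hline : ∀ t : ℝ, HasDerivAt (fun t : ℝ => x + t • d) d t := by
    intro t
    simpa using ((hasDerivAt_id t).smul_const d).const_add x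
  set φ : ℝ → ℝ := fun t => f (x + t • d) - t * ⟪gradient f x, d⟫ - t ^ 2 * (L / 2 * ‖d‖ ^ 2)
    with hφ
  have hφd : ∀ t : ℝ, HasDerivAt φ
      (⟪gradient f (x + t • d), d⟫ - ⟪gradient f x, d⟫ - t * (L * ‖d‖ ^ 2)) t := by
    intro t
    have h1 : HasDerivAt (fun t : ℝ => f (x + t • d)) (⟪gradient f (x + t • d), d⟫) t := by
      have := (hdiff (x + t • d)).comp_hasDerivAt t (hline t)
      simpa [InnerProductSpace.toDual_apply_apply, Function.comp_def] using this
    have h2 : HasDerivAt (fun t : ℝ => t * ⟪gradient f x, d⟫) (⟪gradient f x, d⟫) t := by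
      simpa using (hasDerivAt_id t).mul_const (⟪gradient f x, d⟫)
    have h3 : HasDerivAt (fun t : ℝ => t ^ 2 * (L / 2 * ‖d‖ ^ 2)) (t * (L * ‖d‖ ^ 2)) t := by
      have := (hasDerivAt_pow 2 t).mul_const (L / 2 * ‖d‖ ^ 2)
      refine this.congr_deriv ?_
      ring
    exact (h1.sub h2).sub h3
  have hanti : AntitoneOn φ (Icc (0:ℝ) 1) := by
    apply antitoneOn_of_deriv_nonpos (convex_Icc 0 1)
    · exact fun t _ => ((hφd t).continuousAt).continuousWithinAt
    · exact fun t _ => (hφd t).differentiableAt.differentiableWithinAt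
    · intro t ht
      rw [interior_Icc] at ht
      rw [(hφd t).deriv]
      have hcs : ⟪gradient f (x + t • d) - gradient f x, d⟫ ≤
          ‖gradient f (x + t • d) - gradient f x‖ * ‖d‖ := real_inner_le_norm _ _
      have hlip : ‖gradient f (x + t • d) - gradient f x‖ ≤ L * (t * ‖d‖) := by
        have := hLip (x + t • d) x
        simpa [norm_smul, abs_of_pos ht.1, mul_assoc] using this
      have hinner : ⟪gradient f (x + t • d), d⟫ - ⟪gradient f x, d⟫ =
          ⟪gradient f (x + t • d) - gradient f x, d⟫ := by
        rw [inner_sub_left]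
      rw [hinner]
      have hdn : (0:ℝ) ≤ ‖d‖ := norm_nonneg _
      nlinarith [mul_le_mul_of_nonneg_right hlip hdn]
  have h10 : φ 1 ≤ φ 0 := hanti (by norm_num) (by norm_num) (by norm_num)
  have e1 : x + (1:ℝ) • d = y := by rw [one_smul, hd]; abel
  simp only [hφ, e1, one_pow, one_mul, zero_smul, add_zero, zero_mul, zero_pow,
    pow_two, mul_zero, sub_zero] at h10
  linarith [h10]

/-- the forward–backward envelope is sandwiched between the
objective evaluated at the proximal gradient point and the objective itself:
`F(p_μ(x)) ≤ F_μ(x) ≤ F(x)`. -/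
theorem FB_envelope_sandwich {n : ℕ}
    (f g F : EuclideanSpace ℝ (Fin n) → ℝ)
    (L μ : ℝ) (hL : 0 < L)
    (hfC1 : ContDiff ℝ 1 f)
    (hfconv : ConvexOn ℝ univ f)
    (hfLip : ∀ x y, ‖gradient f x - gradient f y‖ ≤ L * ‖x - y‖)
    (hgconv : ConvexOn ℝ univ g) (hglsc : LowerSemicontinuous g)
    (hF : ∀ x, F x = f x + g x)
    (hμ : μ ∈ Ioo 0 (1 / L))
    (proxg : EuclideanSpace ℝ (Fin n) → EuclideanSpace ℝ (Fin n))
    (hproxg : ∀ v, IsMinOn (fun z => g z + ‖z - v‖ ^ 2 / (2 * μ)) univ (proxg v))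
    (p : EuclideanSpace ℝ (Fin n) → EuclideanSpace ℝ (Fin n))
    (hp : ∀ x, p x = proxg (x - μ • gradient f x))
    (M : EuclideanSpace ℝ (Fin n) → ℝ)
    (hM : ∀ v, M v = ⨅ z : EuclideanSpace ℝ (Fin n), (g z + ‖z - v‖ ^ 2 / (2 * μ)))
    (Fμ : EuclideanSpace ℝ (Fin n) → ℝ)
    (hFμ : ∀ x, Fμ x = f x + M (x - μ • gradient f x) - μ / 2 * ‖gradient f x‖ ^ 2) :
    ∀ x : EuclideanSpace ℝ (Fin n), F (p x) ≤ Fμ x ∧ Fμ x ≤ F x := by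
  obtain ⟨hμ0, hμL⟩ := hμ
  intro x
  set w := gradient f x with hw
  set v := x - μ • w with hv
  set q := proxg v with hq
  have hmin : ∀ z, g q + ‖q - v‖ ^ 2 / (2 * μ) ≤ g z + ‖z - v‖ ^ 2 / (2 * μ) := by
    intro z
    exact (isMinOn_iff.mp (hproxg v)) z (mem_univ z)
  have hMv : M v = g q + ‖q - v‖ ^ 2 / (2 * μ) := by
    rw [hM]
    apply le_antisymm
    · refine ciInf_le ⟨g q + ‖q - v‖ ^ 2 / (2 * μ), ?_⟩ q
      rintro r ⟨z, rfl⟩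
      exact hmin z
    · exact le_ciInf hmin
  have hxv : x - v = μ • w := by rw [hv]; abel
  have hnxv : ‖x - v‖ ^ 2 = μ ^ 2 * ‖w‖ ^ 2 := by
    rw [hxv, norm_smul, Real.norm_eq_abs, abs_of_pos hμ0, mul_pow]
  constructor
  · -- lower bound : F (p x) ≤ Fμ x
    rw [hFμ, hF, hp, ← hv, ← hq, hMv, ← hw]
    have hdesc := descent_lemma f hfC1 L hL.le hfLip x q
    have hqv : q - v = (q - x) + μ • w := by rw [hv]; abel
    have hexp : ‖q - v‖ ^ 2 = ‖q - x‖ ^ 2 + 2 * (μ * ⟪q - x, w⟫) + μ ^ 2 * ‖w‖ ^ 2 := by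
      rw [hqv, norm_add_sq_real, real_inner_smul_right, norm_smul, Real.norm_eq_abs, abs_of_pos hμ0, mul_pow]
    have hLμ : L ≤ 1 / μ := by
      rw [le_div_iff₀ hμ0]
      calc L * μ = μ * L := mul_comm _ _
        _ ≤ 1 := by
            have := hμL
            rw [lt_div_iff₀ hL] at this
            linarith
    have hic : ⟪w, q - x⟫ = ⟪q - x, w⟫ := real_inner_comm _ _
    have hmain : f q ≤ f x + ‖q - v‖ ^ 2 / (2 * μ) - μ / 2 * ‖w‖ ^ 2 := by
      rw [hexp]
      have h1 : L / 2 * ‖q - x‖ ^ 2 ≤ ‖q - x‖ ^ 2 / (2 * μ) := by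
        have he : ‖q - x‖ ^ 2 / (2 * μ) = 1 / μ / 2 * ‖q - x‖ ^ 2 := by ring
        rw [he]
        exact mul_le_mul_of_nonneg_right (by linarith) (sq_nonneg _)
      have := hdesc
      rw [hic] at this
      have heq : (‖q - x‖ ^ 2 + 2 * (μ * ⟪q - x, w⟫) + μ ^ 2 * ‖w‖ ^ 2) / (2 * μ)
          = ‖q - x‖ ^ 2 / (2 * μ) + ⟪q - x, w⟫ + μ / 2 * ‖w‖ ^ 2 := by
        field_simp
      rw [heq]
      linarith
    linarith
  · -- upper bound : Fμ x ≤ F x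
    rw [hFμ, hF, ← hv, ← hw]
    have hMx : M v ≤ g x + ‖x - v‖ ^ 2 / (2 * μ) := by
      rw [hM]
      refine ciInf_le ⟨g q + ‖q - v‖ ^ 2 / (2 * μ), ?_⟩ x
      rintro r ⟨z, rfl⟩
      exact hmin z
    have : ‖x - v‖ ^ 2 / (2 * μ) = μ / 2 * ‖w‖ ^ 2 := by
      rw [hnxv]; field_simp
    linarith [hMx, this ▸ hMx]
end
end

section
/- Let f(x) = (1/2)⟨x, Qx⟩ + ⟨q, x⟩ with Q symmetric positive semidefinite with smallest eigenvalue m ≥ 0 and largest eigenvalue L > 0, let g : ℝⁿ → ℝ be convex and lower semicontinuous, and let μ ∈ (0, 1/L). Set H = I − μQ and m̃ = min{(1 − μm)m, (1 − μL)L}. Then for every x, x' ∈ ℝⁿ: F_μ(x) − F_μ(x') ≤ ⟨G_μ(x), H(x − x')⟩ − (m̃/2)⟨x − x', H(x − x')⟩. -/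
open Set RealInnerProductSpace

noncomputable section

theorem FBaux_psd_cs {n : ℕ} (S : EuclideanSpace ℝ (Fin n) →L[ℝ] EuclideanSpace ℝ (Fin n))
    (hsym : ∀ a b, ⟪S a, b⟫ = ⟪a, S b⟫) (hpsd : ∀ a, 0 ≤ ⟪a, S a⟫)
    (a b : EuclideanSpace ℝ (Fin n)) :
    ⟪a, S b⟫ ^ 2 ≤ ⟪a, S a⟫ * ⟪b, S b⟫ := by
  have hq : ∀ t : ℝ, 0 ≤ ⟪b, S b⟫ * (t * t) + (2 * ⟪a, S b⟫) * t + ⟪a, S a⟫ := by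
    intro t
    have h := hpsd (a + t • b)
    have : ⟪a + t • b, S (a + t • b)⟫
        = ⟪b, S b⟫ * (t * t) + (2 * ⟪a, S b⟫) * t + ⟪a, S a⟫ := by
      rw [map_add, map_smul]
      simp only [inner_add_left, inner_add_right, real_inner_smul_left, real_inner_smul_right]
      have h1 : ⟪b, S a⟫ = ⟪a, S b⟫ := by rw [← hsym, real_inner_comm]
      rw [h1]; ring
    linarith [this ▸ h]
  have := discrim_le_zero hq
  rw [discrim] at this
  nlinarith [this]

theorem FBaux_psd_norm_sq {n : ℕ} (S : EuclideanSpace ℝ (Fin n) →L[ℝ] EuclideanSpace ℝ (Fin n))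
    (hsym : ∀ a b, ⟪S a, b⟫ = ⟪a, S b⟫) (hpsd : ∀ a, 0 ≤ ⟪a, S a⟫)
    (c : ℝ) (hub : ∀ a, ⟪a, S a⟫ ≤ c * ‖a‖ ^ 2) (w : EuclideanSpace ℝ (Fin n)) :
    ‖S w‖ ^ 2 ≤ c * ⟪w, S w⟫ := by
  have h1 := FBaux_psd_cs S hsym hpsd w (S w)
  have h2 : ⟪w, S (S w)⟫ = ‖S w‖ ^ 2 := by
    rw [← hsym, real_inner_self_eq_norm_sq]
  have h3 := hub (S w)
  have h4 := hpsd w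
  rw [h2] at h1
  rcases eq_or_lt_of_le (sq_nonneg ‖S w‖) with h | h
  · rw [← h]
    rcases le_or_gt c 0 with hc | hc
    · have h5 := hub w
      have h6 : c * ‖w‖ ^ 2 ≤ 0 := mul_nonpos_of_nonpos_of_nonneg hc (sq_nonneg _)
      have h7 : ⟪w, S w⟫ = 0 := le_antisymm (by linarith) h4
      rw [h7]; simp
    · positivity
  · nlinarith [h1, h3, h4, h]

theorem FBaux_grad_quad {n : ℕ} (Q : EuclideanSpace ℝ (Fin n) →L[ℝ] EuclideanSpace ℝ (Fin n))
    (q : EuclideanSpace ℝ (Fin n))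
    (hQsym : ∀ x y : EuclideanSpace ℝ (Fin n), ⟪Q x, y⟫ = ⟪x, Q y⟫)
    (f : EuclideanSpace ℝ (Fin n) → ℝ)
    (hf : ∀ x, f x = (1 / 2) * ⟪x, Q x⟫ + ⟪q, x⟫)
    (y : EuclideanSpace ℝ (Fin n)) : gradient f y = Q y + q := by
  have hfe : f = fun t => (1 / 2) * ⟪t, Q t⟫ + ⟪q, t⟫ := funext hf
  have h1 : HasFDerivAt (fun t : EuclideanSpace ℝ (Fin n) => ⟪t, Q t⟫)
      ((fderivInnerCLM ℝ (y, Q y)).comp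
        ((ContinuousLinearMap.id ℝ (EuclideanSpace ℝ (Fin n))).prod Q)) y :=
    (hasFDerivAt_id y).inner ℝ Q.hasFDerivAt
  have h2 : HasFDerivAt (fun t : EuclideanSpace ℝ (Fin n) => ⟪q, t⟫) (innerSL ℝ q) y :=
    (innerSL ℝ q).hasFDerivAt
  have h3 := (h1.const_mul (1 / 2 : ℝ)).add h2
  have h4 : ((1 / 2 : ℝ) • ((fderivInnerCLM ℝ (y, Q y)).comp
        ((ContinuousLinearMap.id ℝ (EuclideanSpace ℝ (Fin n))).prod Q)) + innerSL ℝ q)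
      = (InnerProductSpace.toDual ℝ (EuclideanSpace ℝ (Fin n))) (Q y + q) := by
    apply ContinuousLinearMap.ext
    intro h
    simp only [ContinuousLinearMap.add_apply, ContinuousLinearMap.smul_apply,
      ContinuousLinearMap.coe_comp', Function.comp_apply, ContinuousLinearMap.prod_apply,
      ContinuousLinearMap.coe_id', id_eq, fderivInnerCLM_apply, smul_eq_mul,
      InnerProductSpace.toDual_apply_apply, innerSL_apply_apply, inner_add_left]
    have e1 : ⟪y, Q h⟫ = ⟪Q y, h⟫ := (hQsym y h).symm
    have e2 : ⟪h, Q y⟫ = ⟪Q y, h⟫ := real_inner_comm _ _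
    rw [e1, e2]; ring
  have h5 : HasGradientAt f (Q y + q) y := by
    rw [hasGradientAt_iff_hasFDerivAt, hfe, ← h4]
    exact h3
  exact h5.gradient

theorem FBaux_prox_subgrad {n : ℕ} (g : EuclideanSpace ℝ (Fin n) → ℝ) (μ : ℝ) (hμ0 : 0 < μ)
    (hgconv : ConvexOn ℝ univ g)
    (proxg : EuclideanSpace ℝ (Fin n) → EuclideanSpace ℝ (Fin n))
    (hproxg : ∀ v, IsMinOn (fun z => g z + ‖z - v‖ ^ 2 / (2 * μ)) univ (proxg v))
    (v u : EuclideanSpace ℝ (Fin n)) :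
    g (proxg v) + μ⁻¹ * ⟪v - proxg v, u - proxg v⟫ ≤ g u := by
  set z := proxg v with hz
  set c : ℝ := g u - g z + μ⁻¹ * ⟪z - v, u - z⟫ with hc
  set K : ℝ := ‖u - z‖ ^ 2 / (2 * μ) with hK
  have hK0 : 0 ≤ K := by positivity
  have key : ∀ t : ℝ, 0 < t → t ≤ 1 → 0 ≤ c + t * K := by
    intro t ht0 ht1
    have hmin := isMinOn_iff.mp (hproxg v) (z + t • (u - z)) (mem_univ _)
    have hconv : g (z + t • (u - z)) ≤ (1 - t) * g z + t * g u := by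
      have h := hgconv.2 (mem_univ z) (mem_univ u) (by linarith : (0:ℝ) ≤ 1 - t)
        (le_of_lt ht0) (by ring)
      have he : (1 - t) • z + t • u = z + t • (u - z) := by
        rw [sub_smul, one_smul, smul_sub]; abel
      rwa [he] at h
    have hexp : ‖z + t • (u - z) - v‖ ^ 2
        = ‖z - v‖ ^ 2 + 2 * (t * ⟪z - v, u - z⟫) + t ^ 2 * ‖u - z‖ ^ 2 := by
      have he : z + t • (u - z) - v = (z - v) + t • (u - z) := by abel
      rw [he, norm_add_sq_real, real_inner_smul_right, norm_smul]
      simp [mul_pow, sq_abs]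
    have hmain : 0 ≤ t * (c + t * K) := by
      have h1 : g z + ‖z - v‖ ^ 2 / (2 * μ)
          ≤ g (z + t • (u - z)) + ‖z + t • (u - z) - v‖ ^ 2 / (2 * μ) := hmin
      rw [hexp] at h1
      have hμ' : μ⁻¹ * μ = 1 := inv_mul_cancel₀ (ne_of_gt hμ0)
      have hdiv : ∀ r : ℝ, r / (2 * μ) = μ⁻¹ * r / 2 := by
        intro r
        rw [div_eq_div_iff (by positivity) (by norm_num : (2:ℝ) ≠ 0)]
        field_simp
      rw [hdiv, hdiv] at h1
      have : t * (c + t * K) = t * c + t ^ 2 * K := by ring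
      rw [this, hc, hK, hdiv]
      nlinarith [h1, hconv]
    by_contra hcon
    push_neg at hcon
    have : t * (c + t * K) < 0 := mul_neg_of_pos_of_neg ht0 hcon
    linarith
  have h0c : 0 ≤ c := by
    by_contra hcneg
    push_neg at hcneg
    have hKp : (0:ℝ) < K + 1 := by linarith
    set r : ℝ := -c / (K + 1) with hrdef
    have hrpos : 0 < r := div_pos (neg_pos.mpr hcneg) hKp
    set t : ℝ := min 1 r with ht
    have ht0 : 0 < t := lt_min one_pos hrpos
    have h := key t ht0 (min_le_left _ _)
    have h2 : t * K ≤ r * K :=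
      mul_le_mul_of_nonneg_right (min_le_right _ _) hK0
    have hr : r * (K + 1) = -c := div_mul_cancel₀ _ (ne_of_gt hKp)
    nlinarith [h, h2, hr, hrpos]
  have hflip : ⟪v - z, u - z⟫ = -⟪z - v, u - z⟫ := by
    rw [show v - z = -(z - v) by abel, inner_neg_left]
  rw [hflip]
  rw [hc] at h0c
  linarith
set_option maxHeartbeats 4000000 in
/-- inequality (eq.delta_char): strong-convexity-type bound
for the forward–backward envelope in the `H = I - μQ` weighted geometry, for a
convex quadratic `f`. -/
theorem FB_envelope_weighted_bound {n : ℕ}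
    (Q : EuclideanSpace ℝ (Fin n) →L[ℝ] EuclideanSpace ℝ (Fin n))
    (q : EuclideanSpace ℝ (Fin n)) (g : EuclideanSpace ℝ (Fin n) → ℝ)
    (m L μ mt : ℝ)
    (hQsym : ∀ x y : EuclideanSpace ℝ (Fin n), ⟪Q x, y⟫ = ⟪x, Q y⟫)
    (hm : 0 ≤ m) (hL : 0 < L)
    (hQm : ∀ x : EuclideanSpace ℝ (Fin n), m * ‖x‖ ^ 2 ≤ ⟪x, Q x⟫)
    (hQmmin : ∃ x : EuclideanSpace ℝ (Fin n), x ≠ 0 ∧ ⟪x, Q x⟫ = m * ‖x‖ ^ 2)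
    (hQL : ∀ x : EuclideanSpace ℝ (Fin n), ⟪x, Q x⟫ ≤ L * ‖x‖ ^ 2)
    (hQLmax : ∃ x : EuclideanSpace ℝ (Fin n), x ≠ 0 ∧ ⟪x, Q x⟫ = L * ‖x‖ ^ 2)
    (f : EuclideanSpace ℝ (Fin n) → ℝ)
    (hf : ∀ x, f x = (1 / 2) * ⟪x, Q x⟫ + ⟪q, x⟫)
    (hgconv : ConvexOn ℝ univ g) (hglsc : LowerSemicontinuous g)
    (hμ : μ ∈ Ioo 0 (1 / L))
    (hmt : mt = min ((1 - μ * m) * m) ((1 - μ * L) * L))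
    (proxg : EuclideanSpace ℝ (Fin n) → EuclideanSpace ℝ (Fin n))
    (hproxg : ∀ v, IsMinOn (fun z => g z + ‖z - v‖ ^ 2 / (2 * μ)) univ (proxg v))
    (G : EuclideanSpace ℝ (Fin n) → EuclideanSpace ℝ (Fin n))
    (hG : ∀ x, G x = μ⁻¹ • (x - proxg (x - μ • gradient f x)))
    (M : EuclideanSpace ℝ (Fin n) → ℝ)
    (hM : ∀ v, M v = ⨅ z : EuclideanSpace ℝ (Fin n), (g z + ‖z - v‖ ^ 2 / (2 * μ)))
    (Fμ : EuclideanSpace ℝ (Fin n) → ℝ)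
    (hFμ : ∀ x, Fμ x = f x + M (x - μ • gradient f x) - μ / 2 * ‖gradient f x‖ ^ 2)
    (H : EuclideanSpace ℝ (Fin n) → EuclideanSpace ℝ (Fin n))
    (hH : ∀ x, H x = x - μ • Q x) :
    ∀ x x' : EuclideanSpace ℝ (Fin n),
      Fμ x - Fμ x' ≤ ⟪G x, H (x - x')⟫ - mt / 2 * ⟪x - x', H (x - x')⟫ := by
  have hμ0 : 0 < μ := hμ.1
  have hμL : μ * L < 1 := (lt_div_iff₀ hL).mp hμ.2
  have hμinv : μ⁻¹ * μ = 1 := inv_mul_cancel₀ (ne_of_gt hμ0)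
  have hmL : m ≤ L := by
    obtain ⟨x₀, hx₀, hx₀e⟩ := hQmmin
    have h1 := hQL x₀
    rw [hx₀e] at h1
    have h2 : 0 < ‖x₀‖ ^ 2 := by
      have := norm_pos_iff.mpr hx₀
      positivity
    nlinarith
  have hmtm : mt ≤ m := by
    rw [hmt]
    have h1 : (1 - μ * m) * m ≤ m := by nlinarith [mul_nonneg hμ0.le hm]
    exact le_trans (min_le_left _ _) h1
  have grad_eq : ∀ y, gradient f y = Q y + q := fun y => FBaux_grad_quad Q q hQsym f hf y
  have Mval : ∀ v, M v = g (proxg v) + ‖proxg v - v‖ ^ 2 / (2 * μ) := by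
    intro v
    rw [hM v]
    refine le_antisymm (ciInf_le ⟨g (proxg v) + ‖proxg v - v‖ ^ 2 / (2 * μ), ?_⟩ (proxg v))
      (le_ciInf fun u => isMinOn_iff.mp (hproxg v) u (mem_univ u))
    rintro r ⟨u, rfl⟩
    exact isMinOn_iff.mp (hproxg v) u (mem_univ u)
  have fexp : ∀ p e, f (p + e) = f p + ⟪Q p + q, e⟫ + ⟪e, Q e⟫ / 2 := by
    intro p e
    simp only [hf, map_add, inner_add_left, inner_add_right]
    have e1 : ⟪p, Q e⟫ = ⟪Q p, e⟫ := (hQsym p e).symm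
    have e2 : ⟪e, Q p⟫ = ⟪Q p, e⟫ := real_inner_comm _ _
    rw [e1, e2]; ring
  -- the operator S = Q - mt • id
  set S : EuclideanSpace ℝ (Fin n) →L[ℝ] EuclideanSpace ℝ (Fin n) :=
    Q - mt • ContinuousLinearMap.id ℝ (EuclideanSpace ℝ (Fin n)) with hSdef
  have hSapp : ∀ b, S b = Q b - mt • b := by
    intro b
    simp [hSdef, ContinuousLinearMap.sub_apply, ContinuousLinearMap.smul_apply,
      ContinuousLinearMap.id_apply]
  have hSsym : ∀ a b, ⟪S a, b⟫ = ⟪a, S b⟫ := by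
    intro a b
    rw [hSapp, hSapp]
    simp only [inner_sub_left, inner_sub_right, real_inner_smul_left, real_inner_smul_right]
    rw [hQsym a b]
  have hSpsd : ∀ b, 0 ≤ ⟪b, S b⟫ := by
    intro b
    rw [hSapp, inner_sub_right, real_inner_smul_right, real_inner_self_eq_norm_sq]
    nlinarith [hQm b, mul_nonneg (sub_nonneg.mpr hmtm) (sq_nonneg ‖b‖)]
  have hSub : ∀ b, ⟪b, S b⟫ ≤ (1 - μ * mt) / μ * ‖b‖ ^ 2 := by
    intro b
    rw [hSapp, inner_sub_right, real_inner_smul_right, real_inner_self_eq_norm_sq]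
    have h1 := hQL b
    have h2 : L - mt ≤ (1 - μ * mt) / μ := by
      rw [le_div_iff₀ hμ0]; nlinarith [hμL]
    nlinarith [mul_nonneg (sub_nonneg.mpr h2) (sq_nonneg ‖b‖)]
  intro x x'
  rw [hFμ x, hFμ x', hG x, hH (x - x'), grad_eq x, grad_eq x']
  set v : EuclideanSpace ℝ (Fin n) := x - μ • (Q x + q) with hvdef
  set v' : EuclideanSpace ℝ (Fin n) := x' - μ • (Q x' + q) with hv'def
  rw [Mval v, Mval v']
  set z : EuclideanSpace ℝ (Fin n) := proxg v with hzdef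
  set z' : EuclideanSpace ℝ (Fin n) := proxg v' with hz'def
  set a : EuclideanSpace ℝ (Fin n) := x - z with hadef
  set s : EuclideanSpace ℝ (Fin n) := x' - z' with hsdef
  set w : EuclideanSpace ℝ (Fin n) := x - x' with hwdef
  set d : EuclideanSpace ℝ (Fin n) := z - z' with hddef
  set u : EuclideanSpace ℝ (Fin n) := a - s with hudef
  -- inner product rewrites for the RHS
  have hip1 : ⟪μ⁻¹ • a, w - μ • Q w⟫ = μ⁻¹ * ⟪a, w⟫ - ⟪a, Q w⟫ := by
    rw [real_inner_smul_left, inner_sub_right, real_inner_smul_right]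
    field_simp
  have hip2 : ⟪w, w - μ • Q w⟫ = ‖w‖ ^ 2 - μ * ⟪w, Q w⟫ := by
    rw [inner_sub_right, real_inner_smul_right, real_inner_self_eq_norm_sq]
  rw [hip1, hip2]
  -- value of the envelope at x
  have hN1 : ‖z - v‖ ^ 2 = μ ^ 2 * ‖Q x + q‖ ^ 2 - 2 * (μ * ⟪Q x + q, a⟫) + ‖a‖ ^ 2 := by
    have he : z - v = μ • (Q x + q) - a := by rw [hvdef, hadef]; abel
    rw [he, norm_sub_sq_real, real_inner_smul_left, norm_smul, Real.norm_eq_abs, mul_pow, sq_abs]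
    try ring
  have hF1 : f z = f x - ⟪Q x + q, a⟫ + ⟪a, Q a⟫ / 2 := by
    have h := fexp x (z - x)
    rw [show x + (z - x) = z by abel] at h
    have h2 : z - x = -a := by rw [hadef]; abel
    rw [h2] at h
    simp only [inner_neg_left, inner_neg_right, map_neg, neg_neg] at h
    linarith only [h]
  have hFXeq : f x + (g z + ‖z - v‖ ^ 2 / (2 * μ)) - μ / 2 * ‖Q x + q‖ ^ 2
      = f z + g z + (μ⁻¹ * ‖a‖ ^ 2 / 2 - ⟪a, Q a⟫ / 2) := by
    rw [hF1, hN1]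
    field_simp
    ring
  have hN1' : ‖z' - v'‖ ^ 2 = μ ^ 2 * ‖Q x' + q‖ ^ 2 - 2 * (μ * ⟪Q x' + q, s⟫) + ‖s‖ ^ 2 := by
    have he : z' - v' = μ • (Q x' + q) - s := by rw [hv'def, hsdef]; abel
    rw [he, norm_sub_sq_real, real_inner_smul_left, norm_smul, Real.norm_eq_abs, mul_pow, sq_abs]
    try ring
  have hF1' : f z' = f x' - ⟪Q x' + q, s⟫ + ⟪s, Q s⟫ / 2 := by
    have h := fexp x' (z' - x')
    rw [show x' + (z' - x') = z' by abel] at h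
    have h2 : z' - x' = -s := by rw [hsdef]; abel
    rw [h2] at h
    simp only [inner_neg_left, inner_neg_right, map_neg, neg_neg] at h
    linarith only [h]
  have hFX'eq : f x' + (g z' + ‖z' - v'‖ ^ 2 / (2 * μ)) - μ / 2 * ‖Q x' + q‖ ^ 2
      = f z' + g z' + (μ⁻¹ * ‖s‖ ^ 2 / 2 - ⟪s, Q s⟫ / 2) := by
    rw [hF1', hN1']
    field_simp
    ring
  -- bound for the g-part
  have hgd : g z - g z' ≤ μ⁻¹ * ⟪a, d⟫ - ⟪Q x + q, d⟫ := by
    have h := FBaux_prox_subgrad g μ hμ0 hgconv proxg hproxg v z'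
    rw [← hzdef] at h
    have e : ⟪v - z, z' - z⟫ = μ * ⟪Q x + q, d⟫ - ⟪a, d⟫ := by
      have e1 : v - z = a - μ • (Q x + q) := by rw [hvdef, hadef]; abel
      have e2 : z' - z = -d := by rw [hddef]; abel
      rw [e1, e2, inner_neg_right, inner_sub_left, real_inner_smul_left]
      ring
    rw [e] at h
    have e3 : μ⁻¹ * (μ * ⟪Q x + q, d⟫ - ⟪a, d⟫) = ⟪Q x + q, d⟫ - μ⁻¹ * ⟪a, d⟫ := by
      field_simp
    rw [e3] at h
    linarith only [h]
  -- bound for the f-part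
  have hfd : f z - f z' = ⟪Q x + q, d⟫ - ⟪Q a, d⟫ - ⟪d, Q d⟫ / 2 := by
    have h := fexp z (z' - z)
    rw [show z + (z' - z) = z' by abel] at h
    have h2 : z' - z = -d := by rw [hddef]; abel
    rw [h2] at h
    simp only [inner_neg_left, inner_neg_right, map_neg, neg_neg] at h
    have h3 : ⟪Q z + q, d⟫ = ⟪Q x + q, d⟫ - ⟪Q a, d⟫ := by
      have : Q z + q = (Q x + q) - Q a := by
        rw [hadef, map_sub]; abel
      rw [this, inner_sub_left]
    linarith only [h, h3]
  -- expansion identities in terms of u, s, w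
  have hau : a = u + s := by rw [hudef]; abel
  have hdw : d = w - u := by rw [hddef, hwdef, hudef, hadef, hsdef]; abel
  have E3 : ⟪a, d⟫ = ⟪u, w⟫ + ⟪s, w⟫ - ‖u‖ ^ 2 - ⟪u, s⟫ := by
    rw [hau, hdw]
    simp only [inner_add_left, inner_sub_right]
    rw [real_inner_self_eq_norm_sq, real_inner_comm s u]
    ring
  have E4 : ⟪Q a, d⟫ = ⟪u, Q w⟫ + ⟪s, Q w⟫ - ⟪u, Q u⟫ - ⟪u, Q s⟫ := by
    rw [hau, hdw, map_add]
    simp only [inner_add_left, inner_sub_right]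
    rw [hQsym u w, hQsym u u, hQsym s w, hQsym s u]
    linear_combination -((real_inner_comm (Q u) s).trans (hQsym u s))
  have E5 : ⟪d, Q d⟫ = ⟪w, Q w⟫ - 2 * ⟪u, Q w⟫ + ⟪u, Q u⟫ := by
    rw [hdw, map_sub]
    simp only [inner_sub_left, inner_sub_right]
    rw [← hQsym w u, real_inner_comm (Q w) u]
    ring
  have E6 : ‖a‖ ^ 2 = ‖u‖ ^ 2 + 2 * ⟪u, s⟫ + ‖s‖ ^ 2 := by
    rw [hau, norm_add_sq_real]
  have E7 : ⟪a, Q a⟫ = ⟪u, Q u⟫ + 2 * ⟪u, Q s⟫ + ⟪s, Q s⟫ := by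
    rw [hau, map_add]
    simp only [inner_add_left, inner_add_right]
    linear_combination (real_inner_comm (Q u) s).trans (hQsym u s)
  have E8 : ⟪a, w⟫ = ⟪u, w⟫ + ⟪s, w⟫ := by rw [hau, inner_add_left]
  have E9 : ⟪a, Q w⟫ = ⟪u, Q w⟫ + ⟪s, Q w⟫ := by rw [hau, inner_add_left]
  -- the two key quadratic inequalities
  have key1 : 2 * ⟪u, Q w⟫ ≤ μ * ‖Q w‖ ^ 2 + μ⁻¹ * ‖u‖ ^ 2 := by
    have h1 : ⟪u, Q w⟫ ≤ ‖u‖ * ‖Q w‖ := real_inner_le_norm _ _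
    have h2 : 0 ≤ μ⁻¹ * (μ * ‖Q w‖ - ‖u‖) ^ 2 := by positivity
    have h3 : μ⁻¹ * (μ * ‖Q w‖ - ‖u‖) ^ 2
        = μ * ‖Q w‖ ^ 2 - 2 * (‖u‖ * ‖Q w‖) + μ⁻¹ * ‖u‖ ^ 2 := by
      field_simp
      try ring
    linarith only [h2, h3 ▸ h2, h1]
  have key2 : μ * ‖Q w‖ ^ 2 + mt * ‖w‖ ^ 2 ≤ (1 + μ * mt) * ⟪w, Q w⟫ := by
    have keyS := FBaux_psd_norm_sq S hSsym hSpsd ((1 - μ * mt) / μ) hSub w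
    have eS1 : ‖S w‖ ^ 2 = ‖Q w‖ ^ 2 - 2 * (mt * ⟪w, Q w⟫) + mt ^ 2 * ‖w‖ ^ 2 := by
      rw [hSapp, norm_sub_sq_real, real_inner_smul_right, real_inner_comm (Q w) w, norm_smul,
        Real.norm_eq_abs, mul_pow, sq_abs]
      try ring
    have eS2 : ⟪w, S w⟫ = ⟪w, Q w⟫ - mt * ‖w‖ ^ 2 := by
      rw [hSapp, inner_sub_right, real_inner_smul_right, real_inner_self_eq_norm_sq]
    rw [eS1, eS2] at keyS
    have h2 := mul_le_mul_of_nonneg_left keyS hμ0.le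
    have h3 : μ * ((1 - μ * mt) / μ * (⟪w, Q w⟫ - mt * ‖w‖ ^ 2))
        = (1 - μ * mt) * (⟪w, Q w⟫ - mt * ‖w‖ ^ 2) := by
      field_simp
    rw [h3] at h2
    linarith only [h2]
  -- the final quadratic inequality
  have FIN : μ⁻¹ * ⟪a, d⟫ - ⟪Q a, d⟫ - ⟪d, Q d⟫ / 2
      + (μ⁻¹ * ‖a‖ ^ 2 / 2 - ⟪a, Q a⟫ / 2) - (μ⁻¹ * ‖s‖ ^ 2 / 2 - ⟪s, Q s⟫ / 2)
      ≤ μ⁻¹ * ⟪a, w⟫ - ⟪a, Q w⟫ - mt / 2 * (‖w‖ ^ 2 - μ * ⟪w, Q w⟫) := by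
    rw [E3, E4, E5, E6, E7, E8, E9]
    linarith only [key1, key2]
  linarith only [hFXeq, hFX'eq, hgd, hfd, FIN]
end
end

section
/- Let f(x) = (1/2)⟨x, Qx⟩ + ⟨q, x⟩ with Q symmetric positive semidefinite with largest eigenvalue L > 0, let g : ℝⁿ → ℝ be convex and lower semicontinuous, and let μ ∈ (0, 1/L). Then the forward–backward envelope F_μ is differentiable at every x ∈ ℝⁿ with gradient ∇F_μ(x) = (I − μQ) G_μ(x). -/
open Set RealInnerProductSpace Filter Topology

noncomputable section

section Helpers

variable {F : Type*} [NormedAddCommGroup F] [InnerProductSpace ℝ F]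

private lemma hasGradientAt_of_sq_bound' [CompleteSpace F] {φ : F → ℝ} {a x : F} {C : ℝ}
    (hC : 0 < C) (h : ∀ y, |φ y - φ x - ⟪a, y - x⟫| ≤ C * ‖y - x‖ ^ 2) :
    HasGradientAt φ a x := by
  rw [hasGradientAt_iff_isLittleO, Asymptotics.isLittleO_iff]
  intro c hc
  filter_upwards [Metric.ball_mem_nhds x (show (0:ℝ) < c / C by positivity)] with y hy
  rw [Metric.mem_ball, dist_eq_norm] at hy
  calc ‖φ y - φ x - ⟪a, y - x⟫‖ ≤ C * ‖y - x‖ ^ 2 := by rw [Real.norm_eq_abs]; exact h y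
    _ = (C * ‖y - x‖) * ‖y - x‖ := by ring
    _ ≤ (C * (c / C)) * ‖y - x‖ := by
        exact mul_le_mul_of_nonneg_right
          (mul_le_mul_of_nonneg_left hy.le hC.le) (norm_nonneg _)
    _ = c * ‖y - x‖ := by field_simp

private lemma psd_cs' {Q : F →L[ℝ] F} (hQsym : ∀ x y : F, ⟪Q x, y⟫ = ⟪x, Q y⟫)
    (hQpsd : ∀ x : F, 0 ≤ ⟪x, Q x⟫) (u v : F) :
    ⟪u, Q v⟫ ^ 2 ≤ ⟪u, Q u⟫ * ⟪v, Q v⟫ := by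
  have key : ∀ t : ℝ, 0 ≤ ⟪v, Q v⟫ * (t * t) + (2 * ⟪u, Q v⟫) * t + ⟪u, Q u⟫ := by
    intro t
    have h0 := hQpsd (u + t • v)
    have e : ⟪u + t • v, Q (u + t • v)⟫
        = ⟪v, Q v⟫ * (t * t) + (2 * ⟪u, Q v⟫) * t + ⟪u, Q u⟫ := by
      rw [map_add, map_smul]
      rw [inner_add_left, inner_add_right, inner_add_right,
        real_inner_smul_left, real_inner_smul_left, real_inner_smul_right,
        real_inner_smul_right]
      have : ⟪v, Q u⟫ = ⟪u, Q v⟫ := by rw [← hQsym]; exact real_inner_comm _ _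
      rw [this]; ring
    linarith [e ▸ h0]
  have hd := discrim_le_zero key
  rw [discrim] at hd
  nlinarith

private lemma op_bound' {Q : F →L[ℝ] F} {L : ℝ} (hL : 0 < L)
    (hQsym : ∀ x y : F, ⟪Q x, y⟫ = ⟪x, Q y⟫)
    (hQpsd : ∀ x : F, 0 ≤ ⟪x, Q x⟫)
    (hQL : ∀ x : F, ⟪x, Q x⟫ ≤ L * ‖x‖ ^ 2) (h : F) :
    ‖Q h‖ ≤ L * ‖h‖ := by
  have cs := psd_cs' hQsym hQpsd (Q h) h
  have e : ⟪Q h, Q h⟫ = ‖Q h‖ ^ 2 := real_inner_self_eq_norm_sq _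
  rw [e] at cs
  have h1 := hQL (Q h)
  have h2 := hQL h
  have h3 := hQpsd (Q h)
  have h4 := hQpsd h
  have hn1 : (0:ℝ) ≤ ‖Q h‖ := norm_nonneg _
  have hn2 : (0:ℝ) ≤ ‖h‖ := norm_nonneg _
  have key : ‖Q h‖ ^ 2 * ‖Q h‖ ^ 2 ≤ (L * ‖Q h‖ ^ 2) * (L * ‖h‖ ^ 2) := by
    calc ‖Q h‖ ^ 2 * ‖Q h‖ ^ 2 = (‖Q h‖ ^ 2) ^ 2 := by ring
      _ ≤ ⟪Q h, Q (Q h)⟫ * ⟪h, Q h⟫ := cs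
      _ ≤ (L * ‖Q h‖ ^ 2) * (L * ‖h‖ ^ 2) := mul_le_mul h1 h2 h4 (by positivity)
  rcases eq_or_lt_of_le hn1 with h0 | h0
  · rw [← h0]; positivity
  · have hsq : ‖Q h‖ ^ 2 ≤ L ^ 2 * ‖h‖ ^ 2 := by
      have hpos : (0:ℝ) < ‖Q h‖ ^ 2 := by positivity
      nlinarith
    have := Real.sqrt_le_sqrt hsq
    rw [Real.sqrt_sq hn1, show L ^ 2 * ‖h‖ ^ 2 = (L * ‖h‖) ^ 2 by ring,
      Real.sqrt_sq (by positivity)] at this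
    exact this

private lemma moreau_grad_bound' {g : F → ℝ} (hgconv : ConvexOn ℝ (univ : Set F) g)
    {μ : ℝ} (hμ0 : 0 < μ) {proxg : F → F}
    (hproxg : ∀ v, IsMinOn (fun z => g z + ‖z - v‖ ^ 2 / (2 * μ)) univ (proxg v))
    {M : F → ℝ} (hM : ∀ v, M v = ⨅ z : F, (g z + ‖z - v‖ ^ 2 / (2 * μ))) :
    ∀ u v, |M v - M u - μ⁻¹ * ⟪u - proxg u, v - u⟫| ≤ ‖v - u‖ ^ 2 / (2 * μ) := by
  have hmin : ∀ v z, g (proxg v) + ‖proxg v - v‖ ^ 2 / (2 * μ) ≤ g z + ‖z - v‖ ^ 2 / (2 * μ) :=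
    fun v z => isMinOn_iff.mp (hproxg v) z (mem_univ z)
  have hMval : ∀ v, M v = g (proxg v) + ‖proxg v - v‖ ^ 2 / (2 * μ) := by
    intro v
    rw [hM]
    refine le_antisymm (ciInf_le ⟨g (proxg v) + ‖proxg v - v‖ ^ 2 / (2 * μ), ?_⟩ (proxg v))
      (le_ciInf fun z => hmin v z)
    rintro r ⟨z, rfl⟩
    exact hmin v z
  -- variational inequality
  have hVI : ∀ v z, ⟪v - proxg v, z - proxg v⟫ ≤ μ * (g z - g (proxg v)) := by
    intro v z
    set p := proxg v with hp
    have key : ∀ t ∈ Ioc (0:ℝ) 1,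
        0 ≤ (2 * μ * (g z - g p) - 2 * ⟪v - p, z - p⟫) + t * ‖z - p‖ ^ 2 := by
      intro t ht
      have hmt := hmin v (p + t • (z - p))
      have hconv := hgconv.2 (mem_univ p) (mem_univ z)
          (by linarith [ht.2] : (0:ℝ) ≤ 1 - t) ht.1.le (by ring)
      have hpt : (1 - t) • p + t • z = p + t • (z - p) := by module
      rw [hpt] at hconv
      simp only [smul_eq_mul] at hconv
      have hnorm : ‖p + t • (z - p) - v‖ ^ 2
          = ‖p - v‖ ^ 2 + 2 * (t * ⟪p - v, z - p⟫) + t ^ 2 * ‖z - p‖ ^ 2 := by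
        have e : p + t • (z - p) - v = (p - v) + t • (z - p) := by abel
        rw [e, norm_add_sq_real, real_inner_smul_right, norm_smul,
          Real.norm_eq_abs, mul_pow, sq_abs]
      have h1 : g p + ‖p - v‖ ^ 2 / (2 * μ)
          ≤ (1 - t) * g p + t * g z
            + (‖p - v‖ ^ 2 + 2 * (t * ⟪p - v, z - p⟫) + t ^ 2 * ‖z - p‖ ^ 2) / (2 * μ) := by
        calc g p + ‖p - v‖ ^ 2 / (2 * μ)
            ≤ g (p + t • (z - p)) + ‖p + t • (z - p) - v‖ ^ 2 / (2 * μ) := hmt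
          _ ≤ _ := by rw [hnorm]; linarith [hconv]
      have h2μ : (0:ℝ) < 2 * μ := by linarith
      have hR : 0 ≤ t * ((g z - g p) + (2 * ⟪p - v, z - p⟫ + t * ‖z - p‖ ^ 2) / (2 * μ)) := by
        have e : t * ((g z - g p) + (2 * ⟪p - v, z - p⟫ + t * ‖z - p‖ ^ 2) / (2 * μ))
            = ((1 - t) * g p + t * g z
              + (‖p - v‖ ^ 2 + 2 * (t * ⟪p - v, z - p⟫) + t ^ 2 * ‖z - p‖ ^ 2) / (2 * μ))
              - (g p + ‖p - v‖ ^ 2 / (2 * μ)) := by ring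
        rw [e]; linarith
      have hR2 : 0 ≤ (g z - g p) + (2 * ⟪p - v, z - p⟫ + t * ‖z - p‖ ^ 2) / (2 * μ) := by
        nlinarith [hR, ht.1]
      have h6 := mul_le_mul_of_nonneg_left hR2 h2μ.le
      have e2 : 2 * μ * ((g z - g p) + (2 * ⟪p - v, z - p⟫ + t * ‖z - p‖ ^ 2) / (2 * μ))
          = 2 * μ * (g z - g p) + (2 * ⟪p - v, z - p⟫ + t * ‖z - p‖ ^ 2) := by
        field_simp
      have hip : ⟪p - v, z - p⟫ = -⟪v - p, z - p⟫ := by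
        rw [← neg_sub v p, inner_neg_left]
      rw [e2, hip] at h6
      linarith
    have hlim : Tendsto (fun t : ℝ =>
        (2 * μ * (g z - g p) - 2 * ⟪v - p, z - p⟫) + t * ‖z - p‖ ^ 2)
        (𝓝[>] 0) (𝓝 (2 * μ * (g z - g p) - 2 * ⟪v - p, z - p⟫)) := by
      have hc : Tendsto (fun t : ℝ =>
          (2 * μ * (g z - g p) - 2 * ⟪v - p, z - p⟫) + t * ‖z - p‖ ^ 2)
          (𝓝 0) (𝓝 ((2 * μ * (g z - g p) - 2 * ⟪v - p, z - p⟫) + 0 * ‖z - p‖ ^ 2)) :=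
        (continuous_const.add (continuous_id.mul continuous_const)).tendsto 0
      simpa using hc.mono_left nhdsWithin_le_nhds
    have h0A : 0 ≤ 2 * μ * (g z - g p) - 2 * ⟪v - p, z - p⟫ :=
      ge_of_tendsto hlim (Filter.eventually_of_mem
        (Ioc_mem_nhdsGT_of_mem ⟨le_refl 0, zero_lt_one⟩) key)
    linarith
  -- one-sided upper bound
  have hup : ∀ a b : F, M b - M a - μ⁻¹ * ⟪a - proxg a, b - a⟫ ≤ ‖b - a‖ ^ 2 / (2 * μ) := by
    intro a b
    have h1 : M b ≤ g (proxg a) + ‖proxg a - b‖ ^ 2 / (2 * μ) := by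
      rw [hMval b]; exact hmin b (proxg a)
    have h2 : ‖proxg a - b‖ ^ 2
        = ‖proxg a - a‖ ^ 2 + 2 * ⟪proxg a - a, a - b⟫ + ‖a - b‖ ^ 2 := by
      have e : proxg a - b = (proxg a - a) + (a - b) := by abel
      rw [e, norm_add_sq_real]
    have h3 : ⟪a - proxg a, b - a⟫ = ⟪proxg a - a, a - b⟫ := by
      rw [← neg_sub (proxg a) a, ← neg_sub a b, inner_neg_neg]
    have h4 : (‖proxg a - a‖ ^ 2 + 2 * ⟪proxg a - a, a - b⟫ + ‖a - b‖ ^ 2) / (2 * μ)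
        = ‖proxg a - a‖ ^ 2 / (2 * μ) + μ⁻¹ * ⟪proxg a - a, a - b⟫
          + ‖a - b‖ ^ 2 / (2 * μ) := by
      field_simp
    rw [h3, hMval a, norm_sub_rev b a]
    rw [h2, h4] at h1
    linarith
  -- firm nonexpansiveness
  have hfirm : ∀ a b : F, ‖proxg b - proxg a‖ ^ 2 ≤ ⟪proxg b - proxg a, b - a⟫ := by
    intro a b
    have h1 := hVI b (proxg a)
    have h2 := hVI a (proxg b)
    have e1 : ⟪b - proxg b, proxg a - proxg b⟫
        = -⟪b - proxg b, proxg b - proxg a⟫ := by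
      rw [← neg_sub (proxg b) (proxg a), inner_neg_right]
    have sum : ⟪(a - proxg a) - (b - proxg b), proxg b - proxg a⟫ ≤ 0 := by
      rw [inner_sub_left]
      have hμg : μ * (g (proxg a) - g (proxg b)) + μ * (g (proxg b) - g (proxg a)) = 0 := by
        ring
      rw [e1] at h1
      linarith
    have e2 : (a - proxg a) - (b - proxg b) = (proxg b - proxg a) - (b - a) := by abel
    rw [e2, inner_sub_left, real_inner_self_eq_norm_sq] at sum
    have := real_inner_comm (b - a) (proxg b - proxg a)
    linarith
  have hne : ∀ a b : F, ‖proxg b - proxg a‖ ≤ ‖b - a‖ := by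
    intro a b
    have h1 := hfirm a b
    have h2 := real_inner_le_norm (proxg b - proxg a) (b - a)
    nlinarith [norm_nonneg (proxg b - proxg a), norm_nonneg (b - a)]
  -- two-sided bound
  intro u v
  rw [abs_le]
  refine ⟨?_, hup u v⟩
  have hlow := hup v u
  have e4 : ⟪v - proxg v, u - v⟫ = -⟪v - proxg v, v - u⟫ := by
    rw [← neg_sub v u, inner_neg_right]
  rw [e4, norm_sub_rev u v] at hlow
  have hS : ⟪u - proxg u, v - u⟫ ≤ ⟪v - proxg v, v - u⟫ := by
    have e : (v - proxg v) - (u - proxg u) = (v - u) - (proxg v - proxg u) := by abel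
    have h1 : ⟪v - proxg v, v - u⟫ - ⟪u - proxg u, v - u⟫
        = ⟪(v - u) - (proxg v - proxg u), v - u⟫ := by rw [← inner_sub_left, e]
    have h2 : ⟪proxg v - proxg u, v - u⟫ ≤ ‖proxg v - proxg u‖ * ‖v - u‖ :=
      real_inner_le_norm _ _
    have h3 := hne u v
    have h4 : ⟪(v - u) - (proxg v - proxg u), v - u⟫
        = ‖v - u‖ ^ 2 - ⟪proxg v - proxg u, v - u⟫ := by
      rw [inner_sub_left, real_inner_self_eq_norm_sq]
    nlinarith [norm_nonneg (v - u)]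
  have h5 : μ⁻¹ * ⟪u - proxg u, v - u⟫ ≤ μ⁻¹ * ⟪v - proxg v, v - u⟫ :=
    mul_le_mul_of_nonneg_left hS (by positivity)
  linarith

private lemma quad_expand' {Q : F →L[ℝ] F} {q : F} {f : F → ℝ}
    (hQsym : ∀ x y : F, ⟪Q x, y⟫ = ⟪x, Q y⟫)
    (hf : ∀ x, f x = (1 / 2) * ⟪x, Q x⟫ + ⟪q, x⟫) (x y : F) :
    f y - f x - ⟪Q x + q, y - x⟫ = 1 / 2 * ⟪y - x, Q (y - x)⟫ := by
  have c1 : ⟪Q x, y⟫ = ⟪x, Q y⟫ := hQsym x y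
  have c2 : ⟪y, Q x⟫ = ⟪x, Q y⟫ := (real_inner_comm (Q x) y).trans c1
  have c3 : ⟪Q x, x⟫ = ⟪x, Q x⟫ := hQsym x x
  rw [hf y, hf x, map_sub]
  simp only [inner_add_left, inner_sub_left, inner_sub_right]
  rw [c2, c3, c1]
  ring

end Helpers

set_option maxHeartbeats 1600000 in
/-- eq. for `∇F_μ`: for a convex quadratic `f`, the
forward–backward envelope is differentiable with gradient
`∇F_μ(x) = (I - μQ) G_μ(x)`. -/
theorem FB_envelope_gradient_quadratic {n : ℕ}
    (Q : EuclideanSpace ℝ (Fin n) →L[ℝ] EuclideanSpace ℝ (Fin n))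
    (q : EuclideanSpace ℝ (Fin n)) (g : EuclideanSpace ℝ (Fin n) → ℝ)
    (L μ : ℝ)
    (hQsym : ∀ x y : EuclideanSpace ℝ (Fin n), ⟪Q x, y⟫ = ⟪x, Q y⟫)
    (hQpsd : ∀ x : EuclideanSpace ℝ (Fin n), 0 ≤ ⟪x, Q x⟫)
    (hL : 0 < L)
    (hQL : ∀ x : EuclideanSpace ℝ (Fin n), ⟪x, Q x⟫ ≤ L * ‖x‖ ^ 2)
    (hQLmax : ∃ x : EuclideanSpace ℝ (Fin n), x ≠ 0 ∧ ⟪x, Q x⟫ = L * ‖x‖ ^ 2)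
    (f : EuclideanSpace ℝ (Fin n) → ℝ)
    (hf : ∀ x, f x = (1 / 2) * ⟪x, Q x⟫ + ⟪q, x⟫)
    (hgconv : ConvexOn ℝ univ g) (hglsc : LowerSemicontinuous g)
    (hμ : μ ∈ Ioo 0 (1 / L))
    (proxg : EuclideanSpace ℝ (Fin n) → EuclideanSpace ℝ (Fin n))
    (hproxg : ∀ v, IsMinOn (fun z => g z + ‖z - v‖ ^ 2 / (2 * μ)) univ (proxg v))
    (G : EuclideanSpace ℝ (Fin n) → EuclideanSpace ℝ (Fin n))
    (hG : ∀ x, G x = μ⁻¹ • (x - proxg (x - μ • gradient f x)))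
    (M : EuclideanSpace ℝ (Fin n) → ℝ)
    (hM : ∀ v, M v = ⨅ z : EuclideanSpace ℝ (Fin n), (g z + ‖z - v‖ ^ 2 / (2 * μ)))
    (Fμ : EuclideanSpace ℝ (Fin n) → ℝ)
    (hFμ : ∀ x, Fμ x = f x + M (x - μ • gradient f x) - μ / 2 * ‖gradient f x‖ ^ 2) :
    ∀ x : EuclideanSpace ℝ (Fin n), HasGradientAt Fμ (G x - μ • Q (G x)) x := by
  obtain ⟨hμ0, hμ1⟩ := hμ
  have hquad := quad_expand' hQsym hf
  have hop := op_bound' hL hQsym hQpsd hQL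
  -- gradient of f
  have hgrad : ∀ x, gradient f x = Q x + q := by
    intro x
    refine HasGradientAt.gradient ?_
    apply hasGradientAt_of_sq_bound' (C := L / 2) (by positivity)
    intro y
    rw [hquad x y]
    have h0 := hQpsd (y - x)
    have h1 := hQL (y - x)
    rw [abs_of_nonneg (by linarith)]
    linarith
  have mb := moreau_grad_bound' hgconv hμ0 hproxg hM
  intro x
  set a := Q x + q with ha
  apply hasGradientAt_of_sq_bound'
    (C := L / 2 + (1 + μ * L) ^ 2 / (2 * μ) + μ * L ^ 2 / 2) (by positivity)
  intro y
  set Tx := x - μ • a with hTxdef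
  set Ty := y - μ • (Q y + q) with hTydef
  set w := μ⁻¹ • (Tx - proxg Tx) with hwdef
  have hFμy : Fμ y = f y + M Ty - μ / 2 * ‖Q y + q‖ ^ 2 := by
    rw [hFμ y, hgrad y]
  have hFμx : Fμ x = f x + M Tx - μ / 2 * ‖a‖ ^ 2 := by
    rw [hFμ x, hgrad x, ← ha, ← hTxdef]
  have hGx : G x = μ⁻¹ • (x - proxg Tx) := by
    rw [hG x, hgrad x, ← ha, ← hTxdef]
  have hw : w = G x - a := by
    rw [hwdef, hGx]
    have e : Tx - proxg Tx = (x - proxg Tx) - μ • a := by rw [hTxdef]; abel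
    rw [e, smul_sub, smul_smul, inv_mul_cancel₀ hμ0.ne', one_smul]
  have hT : Ty - Tx = (y - x) - μ • Q (y - x) := by
    rw [hTydef, hTxdef, ha, map_sub]
    module
  have hip2 : μ⁻¹ * ⟪Tx - proxg Tx, Ty - Tx⟫ = ⟪w - μ • Q w, y - x⟫ := by
    have hu : Tx - proxg Tx = μ • w := by
      rw [hwdef, smul_smul, mul_inv_cancel₀ hμ0.ne', one_smul]
    rw [hu, hT, real_inner_smul_left w (y - x - μ • Q (y - x)) μ,
      inner_sub_right w (y - x) (μ • Q (y - x)),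
      real_inner_smul_right w (Q (y - x)) μ,
      inner_sub_left w (μ • Q w) (y - x),
      real_inner_smul_left (Q w) (y - x) μ, hQsym w (y - x)]
    field_simp
  have mb2 := mb Tx Ty
  rw [hip2] at mb2
  have hTn : ‖Ty - Tx‖ ≤ (1 + μ * L) * ‖y - x‖ := by
    rw [hT]
    calc ‖(y - x) - μ • Q (y - x)‖ ≤ ‖y - x‖ + ‖μ • Q (y - x)‖ := norm_sub_le _ _
      _ = ‖y - x‖ + μ * ‖Q (y - x)‖ := by
          rw [norm_smul, Real.norm_eq_abs, abs_of_pos hμ0]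
      _ ≤ ‖y - x‖ + μ * (L * ‖y - x‖) := by
          have := hop (y - x); nlinarith
      _ = (1 + μ * L) * ‖y - x‖ := by ring
  have hTn2 : ‖Ty - Tx‖ ^ 2 ≤ (1 + μ * L) ^ 2 * ‖y - x‖ ^ 2 := by
    nlinarith [norm_nonneg (Ty - Tx), norm_nonneg (y - x)]
  have hE2 : |M Ty - M Tx - ⟪w - μ • Q w, y - x⟫|
      ≤ (1 + μ * L) ^ 2 * ‖y - x‖ ^ 2 / (2 * μ) := by
    refine mb2.trans ?_
    gcongr
  have hQyq : Q y + q = a + Q (y - x) := by rw [ha, map_sub]; abel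
  have hE3eq : -(μ / 2 * ‖Q y + q‖ ^ 2) + μ / 2 * ‖a‖ ^ 2 - ⟪-(μ • Q a), y - x⟫
      = -(μ / 2) * ‖Q (y - x)‖ ^ 2 := by
    rw [hQyq, norm_add_sq_real, inner_neg_left, real_inner_smul_left, hQsym a (y - x)]
    ring
  have hsum : a + ((G x - a) - μ • Q (G x - a)) + -(μ • Q a) = G x - μ • Q (G x) := by
    rw [map_sub]; module
  have hinner_split : ⟪G x - μ • Q (G x), y - x⟫
      = ⟪a, y - x⟫ + ⟪w - μ • Q w, y - x⟫ + ⟪-(μ • Q a), y - x⟫ := by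
    rw [← hsum, inner_add_left, inner_add_left, ← hw]
  have main : Fμ y - Fμ x - ⟪G x - μ • Q (G x), y - x⟫
      = (f y - f x - ⟪a, y - x⟫) + (M Ty - M Tx - ⟪w - μ • Q w, y - x⟫)
        + (-(μ / 2) * ‖Q (y - x)‖ ^ 2) := by
    rw [hFμy, hFμx, hinner_split]
    linarith [hE3eq]
  rw [main]
  have b1 : |f y - f x - ⟪a, y - x⟫| ≤ L / 2 * ‖y - x‖ ^ 2 := by
    rw [ha, hquad x y]
    have h0 := hQpsd (y - x)
    have h1 := hQL (y - x)
    rw [abs_of_nonneg (by linarith)]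
    linarith
  have b3 : |(-(μ / 2) * ‖Q (y - x)‖ ^ 2)| ≤ μ * L ^ 2 / 2 * ‖y - x‖ ^ 2 := by
    rw [abs_mul, abs_neg, abs_of_nonneg (le_of_lt (by linarith : (0:ℝ) < μ / 2)),
      abs_of_nonneg (by positivity : (0:ℝ) ≤ ‖Q (y - x)‖ ^ 2)]
    have h1 := hop (y - x)
    have hsq : ‖Q (y - x)‖ ^ 2 ≤ (L * ‖y - x‖) ^ 2 := by
      nlinarith [norm_nonneg (Q (y - x))]
    nlinarith [mul_le_mul_of_nonneg_left hsq hμ0.le]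
  refine le_trans (le_trans (abs_add_le _ _) (add_le_add_left (abs_add_le _ _) _)) ?_
  refine le_trans (add_le_add (add_le_add b1 hE2) b3) ?_
  exact le_of_eq (by ring)
end
end

section
/- Let 0 < m ≤ L and μ > 0 with μL < 1, and let θ, β, γ be real numbers with 1 − γβ ≥ 0. Suppose (1 − θβ) ≥ (1 − μσ)(1 − γβ) for all σ ∈ [m, L]. Then the function σ ↦ (1 − θβ)²/(1 − μσ) + (1 − γβ)²(1 − μσ) is monotone increasing on [m, L]; in particular, for every σ ∈ [m, L], (1 − θβ)²/(1 − μσ) + (1 − γβ)²(1 − μσ) ≤ (1 − θβ)²/(1 − μL) + (1 − γβ)²(1 − μL). -/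
/-- the scalar maximization step in the Lyapunov analysis:
under the condition `(1 - θβ) ≥ (1 - μσ)(1 - γβ)` on `[m, L]`, the function
`σ ↦ (1 - θβ)²/(1 - μσ) + (1 - γβ)²(1 - μσ)` is monotone increasing on
`[m, L]`, so its maximum over `[m, L]` is attained at `σ = L`. -/
theorem lyapunov_scalar_maximization (m L μ θ β γ : ℝ)
    (hm : 0 < m) (hmL : m ≤ L) (hμ : 0 < μ) (hμL : μ * L < 1)
    (hγβ : 0 ≤ 1 - γ * β)
    (hcond : ∀ σ ∈ Set.Icc m L, (1 - μ * σ) * (1 - γ * β) ≤ 1 - θ * β) :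
    MonotoneOn (fun σ => (1 - θ * β) ^ 2 / (1 - μ * σ) +
        (1 - γ * β) ^ 2 * (1 - μ * σ)) (Set.Icc m L) ∧
    ∀ σ ∈ Set.Icc m L,
      (1 - θ * β) ^ 2 / (1 - μ * σ) + (1 - γ * β) ^ 2 * (1 - μ * σ) ≤
        (1 - θ * β) ^ 2 / (1 - μ * L) + (1 - γ * β) ^ 2 * (1 - μ * L) := by
  have key : ∀ x ∈ Set.Icc m L, ∀ y ∈ Set.Icc m L, x ≤ y →
      (1 - θ * β) ^ 2 / (1 - μ * x) + (1 - γ * β) ^ 2 * (1 - μ * x) ≤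
      (1 - θ * β) ^ 2 / (1 - μ * y) + (1 - γ * β) ^ 2 * (1 - μ * y) := by
    intro x hx y hy hxy
    have hvy : 0 < 1 - μ * y := by nlinarith [hy.2]
    have hvx : 0 < 1 - μ * x := by nlinarith [hx.2]
    have hax := hcond x hx
    have hay := hcond y hy
    have ha : 0 ≤ 1 - θ * β := le_trans (mul_nonneg hvx.le hγβ) hax
    have h2 : (1 - γ * β) ^ 2 * ((1 - μ * x) * (1 - μ * y)) ≤ (1 - θ * β) ^ 2 := by
      nlinarith [mul_le_mul hax hay (mul_nonneg hvy.le hγβ) ha]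
    rw [div_add' _ _ _ hvx.ne', div_add' _ _ _ hvy.ne', div_le_div_iff₀ hvx hvy]
    nlinarith [mul_nonneg (sub_nonneg.2 h2) (sub_nonneg.2 (show 1 - μ * x ≥ 1 - μ * y by nlinarith))]
  exact ⟨fun x hx y hy hxy => key x hx y hy hxy,
    fun σ hσ => key σ hσ L ⟨hmL, le_rfl⟩ hσ.2⟩
end
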